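/- arXiv:2302.12659 — 3 statements merged into one kernel-verified Lean document; each statement's English description precedes it below -/
import Mathlib

section
/- For every integer n ≥ 0, the images in C(n) of the monomials τ^E ξ^R with e_s ∈ {0,1} for 0 ≤ s ≤ n, r₁ ≥ 0 arbitrary, and 0 ≤ r_s < 2^{n+1−s} for 2 ≤ s ≤ n, form a basis of C(n) as a free k-module. (Paper's Lemma on left H-bases of C(n)_{∗,∗}, part (a), case ℓ = 2.) -/
open MvPolynomial TensorProduct

noncomputable section

/-- Variables of the dual motivic Steenrod algebra: `.inl i` is `τᵢ`, `.inr i` is `ξ_{i+1}`. -/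
abbrev MotVar : Type := ℕ ⊕ ℕ

variable (k : Type) [CommRing k]

/-- `τᵢ` as a polynomial generator. -/
def tP (i : ℕ) : MvPolynomial MotVar k := X (Sum.inl i)

/-- `ξᵢ` as a polynomial generator, with the convention `ξ₀ = 1`. -/
def xP : ℕ → MvPolynomial MotVar k
  | 0 => 1
  | i + 1 => X (Sum.inr i)

variable (τ ρ : k)

/-- The ideal of defining relations `τᵢ² = τ·ξ_{i+1} + ρ·τ_{i+1} + ρ·τ₀·ξ_{i+1}`. -/
def relIdeal : Ideal (MvPolynomial MotVar k) :=
  Ideal.span (Set.range fun i : ℕ =>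
    tP k i ^ 2 - (C τ * xP k (i + 1) + C ρ * tP k (i + 1) + C ρ * tP k 0 * xP k (i + 1)))

/-- The mod 2 dual motivic Steenrod algebra over `k` (with `H_{*,*}` replaced by `k`). -/
abbrev DSA : Type := MvPolynomial MotVar k ⧸ relIdeal k τ ρ

/-- The canonical projection onto the dual Steenrod algebra. -/
def mkDSA : MvPolynomial MotVar k →+* DSA k τ ρ := Ideal.Quotient.mk _

/-- The monomial `τ^E ξ^R`, where `R i` records the exponent `r_{i+1}` of `ξ_{i+1}`. -/
def monP (E R : ℕ →₀ ℕ) : MvPolynomial MotVar k :=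
  (E.prod fun i e => tP k i ^ e) * (R.prod fun i r => xP k (i + 1) ^ r)

/-- The ideal `J(n) ⊆ 𝒜`, generated by the `τ_m` with `m ≥ n+1` and the `ξᵢ^{2^j}`
with `i ≥ 2`, `j ≥ 0`, `i + j ≥ n+1`. -/
def Jideal (n : ℕ) : Ideal (DSA k τ ρ) :=
  Ideal.span ({x | ∃ m : ℕ, n + 1 ≤ m ∧ x = mkDSA k τ ρ (tP k m)} ∪
    {x | ∃ i j : ℕ, 2 ≤ i ∧ n + 1 ≤ i + j ∧ x = mkDSA k τ ρ (xP k i ^ 2 ^ j)})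

/-- The quotient `C(n) = 𝒜/J(n)`. -/
abbrev Cn (n : ℕ) : Type := DSA k τ ρ ⧸ Jideal k τ ρ n

/-- The index set for the monomial basis of `C(n)`: every `e_s ∈ {0,1}` for `0 ≤ s ≤ n`,
`r₁ ≥ 0` arbitrary, and `0 ≤ r_s < 2^{n+1-s}` for `2 ≤ s ≤ n` (recall `R i = r_{i+1}`). -/
def IdxC (n : ℕ) : Type :=
  {p : (ℕ →₀ ℕ) × (ℕ →₀ ℕ) //
    (∀ s, p.1 s ≤ 1) ∧ (∀ s, n < s → p.1 s = 0) ∧ (∀ i, 1 ≤ i → p.2 i < 2 ^ (n - i))}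


namespace S5

open Finsupp

variable {k : Type} [CommRing k]

def wt (d : MotVar →₀ ℕ) : ℕ := d.sum fun a e => (Sum.elim (fun _ => 3) (fun _ => 1) a) * e

lemma wt_add (a b : MotVar →₀ ℕ) : wt (a + b) = wt a + wt b := by
  classical
  refine Finsupp.sum_add_index (by simp) (by intro a _ b₁ b₂; ring)

lemma wt_single (x : MotVar) (e : ℕ) :
    wt (single x e) = (Sum.elim (fun _ => 3) (fun _ => 1) x) * e := by
  classical
  simp [wt, Finsupp.sum_single_index]

lemma sub_add_cancel_of_le {d s : MotVar →₀ ℕ} (h : s ≤ d) : d - s + s = d :=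
  tsub_add_cancel_of_le h

lemma wt_lt {d x : MotVar →₀ ℕ} {i : ℕ} (hi : 2 ≤ d (Sum.inl i)) (hx : wt x < 6) :
    wt (d - single (Sum.inl i) 2 + x) < wt d := by
  have hs : single (Sum.inl i) 2 ≤ d := Finsupp.single_le_iff.mpr hi
  have h1 : wt (d - single (Sum.inl i) 2) + wt (single (Sum.inl i) 2) = wt d := by
    rw [← wt_add, sub_add_cancel_of_le hs]
  rw [wt_single] at h1
  simp only [Sum.elim_inl] at h1
  rw [wt_add]
  omega

def Bad (n : ℕ) (d : MotVar →₀ ℕ) : Prop :=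
  (∃ m, n < m ∧ d (Sum.inl m) ≠ 0) ∨ (∃ s, 1 ≤ s ∧ 2 ^ (n - s) ≤ d (Sum.inr s))

def toMV (E R : ℕ →₀ ℕ) : MotVar →₀ ℕ := E.mapDomain Sum.inl + R.mapDomain Sum.inr

lemma toMV_inl (E R : ℕ →₀ ℕ) (i : ℕ) : toMV E R (Sum.inl i) = E i := by
  simp [toMV, Finsupp.mapDomain_apply Sum.inl_injective,
    Finsupp.mapDomain_notin_range (f := Sum.inr) (a := Sum.inl i) R (by simp)]

lemma toMV_inr (E R : ℕ →₀ ℕ) (i : ℕ) : toMV E R (Sum.inr i) = R i := by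
  simp [toMV, Finsupp.mapDomain_apply Sum.inr_injective,
    Finsupp.mapDomain_notin_range (f := Sum.inl) (a := Sum.inr i) E (by simp)]

def Ep (d : MotVar →₀ ℕ) : ℕ →₀ ℕ := comapDomain Sum.inl d Sum.inl_injective.injOn

def Rp (d : MotVar →₀ ℕ) : ℕ →₀ ℕ := comapDomain Sum.inr d Sum.inr_injective.injOn

@[simp] lemma Ep_apply (d : MotVar →₀ ℕ) (i : ℕ) : Ep d i = d (Sum.inl i) := rfl
@[simp] lemma Rp_apply (d : MotVar →₀ ℕ) (i : ℕ) : Rp d i = d (Sum.inr i) := rfl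

lemma toMV_Ep_Rp (d : MotVar →₀ ℕ) : toMV (Ep d) (Rp d) = d := by
  ext a
  cases a with
  | inl i => rw [toMV_inl]; rfl
  | inr i => rw [toMV_inr]; rfl

def redIdx (n : ℕ) (d : MotVar →₀ ℕ) (h0 : ¬ Bad n d) (h1 : ¬ ∃ i, 2 ≤ d (Sum.inl i)) :
    IdxC n :=
  ⟨(Ep d, Rp d), by
    push_neg at h1
    refine ⟨fun s => by have := h1 s; simpa using by omega, fun s hs => ?_, fun i hi => ?_⟩
    · by_contra hne
      exact h0 (Or.inl ⟨s, hs, hne⟩)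
    · by_contra hlt
      push_neg at hlt
      exact h0 (Or.inr ⟨i, hi, hlt⟩)⟩

open Classical in
def nf (τ ρ : k) (n : ℕ) (d : MotVar →₀ ℕ) : IdxC n →₀ k :=
  if h0 : Bad n d then 0
  else if h : ∃ i, 2 ≤ d (Sum.inl i) then
    τ • nf τ ρ n (d - single (Sum.inl (Nat.find h)) 2 + single (Sum.inr (Nat.find h)) 1)
    + ρ • nf τ ρ n (d - single (Sum.inl (Nat.find h)) 2 + single (Sum.inl (Nat.find h + 1)) 1)
    + ρ • nf τ ρ n (d - single (Sum.inl (Nat.find h)) 2 +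
        (single (Sum.inl 0) 1 + single (Sum.inr (Nat.find h)) 1))
  else single (redIdx n d h0 h) 1
termination_by wt d
decreasing_by
  · exact wt_lt (Nat.find_spec h) (by rw [wt_single]; simp)
  · exact wt_lt (Nat.find_spec h) (by rw [wt_single]; simp)
  · exact wt_lt (Nat.find_spec h) (by rw [wt_add, wt_single, wt_single]; simp)

open Classical in
lemma nf_bad (τ ρ : k) (n : ℕ) {d : MotVar →₀ ℕ} (h : Bad n d) : nf τ ρ n d = 0 := by
  rw [nf, dif_pos h]

open Classical in
lemma nf_red (τ ρ : k) (n : ℕ) {d : MotVar →₀ ℕ} (h0 : ¬ Bad n d)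
    (h : ¬ ∃ i, 2 ≤ d (Sum.inl i)) :
    nf τ ρ n d = single (redIdx n d h0 h) 1 := by
  rw [nf, dif_neg h0, dif_neg h]
open Classical in
lemma nf_rewrite (τ ρ : k) (n : ℕ) :
    ∀ (d : MotVar →₀ ℕ) (i : ℕ), 2 ≤ d (Sum.inl i) →
    nf τ ρ n d =
      τ • nf τ ρ n (d - single (Sum.inl i) 2 + single (Sum.inr i) 1)
      + ρ • nf τ ρ n (d - single (Sum.inl i) 2 + single (Sum.inl (i+1)) 1)
      + ρ • nf τ ρ n (d - single (Sum.inl i) 2 +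
          (single (Sum.inl 0) 1 + single (Sum.inr i) 1)) := by
  suffices H : ∀ N (d : MotVar →₀ ℕ) (i : ℕ), wt d ≤ N → 2 ≤ d (Sum.inl i) →
      nf τ ρ n d =
      τ • nf τ ρ n (d - single (Sum.inl i) 2 + single (Sum.inr i) 1)
      + ρ • nf τ ρ n (d - single (Sum.inl i) 2 + single (Sum.inl (i+1)) 1)
      + ρ • nf τ ρ n (d - single (Sum.inl i) 2 +
          (single (Sum.inl 0) 1 + single (Sum.inr i) 1)) by
    exact fun d i hi => H (wt d) d i le_rfl hi
  intro N
  induction N using Nat.strong_induction_on with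
  | _ N IH =>
  intro d i hN hi
  by_cases h0 : Bad n d
  · rw [nf_bad _ _ _ h0]
    rcases h0 with ⟨m, hm, hmne⟩ | ⟨s, hs, hsle⟩
    · by_cases him : i ≤ n
      · have key : ∀ x : MotVar →₀ ℕ,
            nf τ ρ n (d - single (Sum.inl i) 2 + x) = 0 := by
          intro x
          refine nf_bad _ _ _ (Or.inl ⟨m, hm, ?_⟩)
          have hmi : i ≠ m := by omega
          simp [Finsupp.tsub_apply, Finsupp.single_apply, hmi]
          omega
        rw [key, key, key]; simp
      · push_neg at him
        have hn0 : n - i = 0 := by omega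
        rw [nf_bad _ _ _ (Or.inr ⟨i, by omega, by
              simp [Finsupp.tsub_apply, Finsupp.single_apply, hn0]⟩),
            nf_bad _ _ _ (Or.inl ⟨i + 1, by omega, by
              simp [Finsupp.tsub_apply, Finsupp.single_apply]⟩),
            nf_bad _ _ _ (Or.inr ⟨i, by omega, by
              simp [Finsupp.tsub_apply, Finsupp.single_apply, hn0]⟩)]
        simp
    · have key : ∀ x : MotVar →₀ ℕ,
          d (Sum.inr s) ≤ (d - single (Sum.inl i) 2 + x : MotVar →₀ ℕ) (Sum.inr s) := by
        intro x
        simp [Finsupp.tsub_apply, Finsupp.single_apply]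
      rw [nf_bad _ _ _ (Or.inr ⟨s, hs, le_trans hsle (key _)⟩),
          nf_bad _ _ _ (Or.inr ⟨s, hs, le_trans hsle (key _)⟩),
          nf_bad _ _ _ (Or.inr ⟨s, hs, le_trans hsle (key _)⟩)]
      simp
  · have h : ∃ j, 2 ≤ d (Sum.inl j) := ⟨i, hi⟩
    rw [nf, dif_neg h0, dif_pos h]
    rcases eq_or_ne (Nat.find h) i with he | hne
    · rw [he]
    · have hi₀ : 2 ≤ d (Sum.inl (Nat.find h)) := Nat.find_spec h
      set i₀ := Nat.find h with hi₀def
      have hval₀ : (d - single (Sum.inl i₀) 2 : MotVar →₀ ℕ) (Sum.inl i)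
          = d (Sum.inl i) := by
        simp [Finsupp.tsub_apply, Finsupp.single_apply, hne]
      have hvalᵢ : (d - single (Sum.inl i) 2 : MotVar →₀ ℕ) (Sum.inl i₀)
          = d (Sum.inl i₀) := by
        simp [Finsupp.tsub_apply, Finsupp.single_apply, Ne.symm hne]
      have hsub : ∀ x : MotVar →₀ ℕ,
          2 ≤ (d - single (Sum.inl i₀) 2 + x : MotVar →₀ ℕ) (Sum.inl i) := by
        intro x; simp only [Finsupp.add_apply, hval₀]; omega
      have hsub' : ∀ y : MotVar →₀ ℕ,
          2 ≤ (d - single (Sum.inl i) 2 + y : MotVar →₀ ℕ) (Sum.inl i₀) := by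
        intro y; simp only [Finsupp.add_apply, hvalᵢ]; omega
      have hsi' : single (Sum.inl i) 2 ≤ d - single (Sum.inl i₀) 2 :=
        Finsupp.single_le_iff.mpr (by rw [hval₀]; exact hi)
      have hs0' : single (Sum.inl i₀) 2 ≤ d - single (Sum.inl i) 2 :=
        Finsupp.single_le_iff.mpr (by rw [hvalᵢ]; exact hi₀)
      have swapL : ∀ x y : MotVar →₀ ℕ,
          d - single (Sum.inl i₀) 2 + x - single (Sum.inl i) 2 + y
            = d - (single (Sum.inl i₀) 2 + single (Sum.inl i) 2) + (x + y) := by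
        intro x y
        rw [← tsub_add_eq_add_tsub hsi', add_assoc, tsub_tsub]
      have swapR : ∀ x y : MotVar →₀ ℕ,
          d - single (Sum.inl i) 2 + y - single (Sum.inl i₀) 2 + x
            = d - (single (Sum.inl i₀) 2 + single (Sum.inl i) 2) + (x + y) := by
        intro x y
        rw [← tsub_add_eq_add_tsub hs0', add_assoc, tsub_tsub,
          add_comm (single (Sum.inl i) 2) (single (Sum.inl i₀) 2), add_comm y x]
      have expandL : ∀ x : MotVar →₀ ℕ, wt x < 6 →
          nf τ ρ n (d - single (Sum.inl i₀) 2 + x) =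
            τ • nf τ ρ n (d - single (Sum.inl i₀) 2 + x - single (Sum.inl i) 2
                + single (Sum.inr i) 1)
            + ρ • nf τ ρ n (d - single (Sum.inl i₀) 2 + x - single (Sum.inl i) 2
                + single (Sum.inl (i+1)) 1)
            + ρ • nf τ ρ n (d - single (Sum.inl i₀) 2 + x - single (Sum.inl i) 2
                + (single (Sum.inl 0) 1 + single (Sum.inr i) 1)) := by
        intro x hx
        exact IH _ (lt_of_lt_of_le (wt_lt hi₀ hx) hN) _ i le_rfl (hsub x)
      have expandR : ∀ y : MotVar →₀ ℕ, wt y < 6 →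
          nf τ ρ n (d - single (Sum.inl i) 2 + y) =
            τ • nf τ ρ n (d - single (Sum.inl i) 2 + y - single (Sum.inl i₀) 2
                + single (Sum.inr i₀) 1)
            + ρ • nf τ ρ n (d - single (Sum.inl i) 2 + y - single (Sum.inl i₀) 2
                + single (Sum.inl (i₀+1)) 1)
            + ρ • nf τ ρ n (d - single (Sum.inl i) 2 + y - single (Sum.inl i₀) 2
                + (single (Sum.inl 0) 1 + single (Sum.inr i₀) 1)) := by
        intro y hy
        exact IH _ (lt_of_lt_of_le (wt_lt hi hy) hN) _ i₀ le_rfl (hsub' y)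
      rw [expandL _ (by rw [wt_single]; simp),
          expandL _ (by rw [wt_single]; simp),
          expandL _ (by rw [wt_add, wt_single, wt_single]; simp),
          expandR _ (by rw [wt_single]; simp),
          expandR _ (by rw [wt_single]; simp),
          expandR _ (by rw [wt_add, wt_single, wt_single]; simp)]
      simp only [swapL, swapR]
      simp only [smul_add, smul_smul]
      module

def nfL (τ ρ : k) (n : ℕ) : MvPolynomial MotVar k →ₗ[k] (IdxC n →₀ k) :=
  (MvPolynomial.basisMonomials MotVar k).constr k (nf τ ρ n)

lemma nfL_monomial (τ ρ : k) (n : ℕ) (d : MotVar →₀ ℕ) :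
    nfL τ ρ n (monomial d (1 : k)) = nf τ ρ n d := by
  have h := congrFun (MvPolynomial.coe_basisMonomials MotVar k) d
  rw [← h]
  exact (MvPolynomial.basisMonomials MotVar k).constr_basis k (nf τ ρ n) d

lemma nfL_monomial' (τ ρ : k) (n : ℕ) (d : MotVar →₀ ℕ) (a : k) :
    nfL τ ρ n (monomial d a) = a • nf τ ρ n d := by
  have : monomial d a = a • monomial d (1 : k) := by
    rw [MvPolynomial.smul_monomial, smul_eq_mul, mul_one]
  rw [this, map_smul, nfL_monomial]

lemma nfL_mul_eq_zero_of_monomials (τ ρ : k) (n : ℕ) (g : MvPolynomial MotVar k)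
    (h : ∀ d : MotVar →₀ ℕ, nfL τ ρ n (monomial d (1 : k) * g) = 0) :
    ∀ q, nfL τ ρ n (q * g) = 0 := by
  have : (nfL τ ρ n).comp (LinearMap.mulRight k g) = 0 := by
    refine (MvPolynomial.basisMonomials MotVar k).ext fun d => ?_
    have hb := congrFun (MvPolynomial.coe_basisMonomials MotVar k) d
    simp only [LinearMap.comp_apply, LinearMap.mulRight_apply, LinearMap.zero_apply, hb]
    exact h d
  intro q
  have := congrFun (congrArg DFunLike.coe this) q
  simpa using this

lemma nfL_mul_tP (τ ρ : k) (n m : ℕ) (hm : n + 1 ≤ m) (q : MvPolynomial MotVar k) :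
    nfL τ ρ n (q * tP k m) = 0 := by
  refine nfL_mul_eq_zero_of_monomials τ ρ n _ (fun d => ?_) q
  rw [tP, X, MvPolynomial.monomial_mul, mul_one, nfL_monomial]
  refine nf_bad τ ρ n (Or.inl ⟨m, by omega, ?_⟩)
  simp [Finsupp.single_apply]

lemma nfL_mul_xP (τ ρ : k) (n i j : ℕ) (hi : 2 ≤ i) (hij : n + 1 ≤ i + j)
    (q : MvPolynomial MotVar k) :
    nfL τ ρ n (q * xP k i ^ 2 ^ j) = 0 := by
  obtain ⟨s, rfl⟩ : ∃ s, i = s + 1 := ⟨i - 1, by omega⟩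
  refine nfL_mul_eq_zero_of_monomials τ ρ n _ (fun d => ?_) q
  rw [show xP k (s + 1) = X (Sum.inr s) from rfl, MvPolynomial.X_pow_eq_monomial,
    MvPolynomial.monomial_mul, mul_one, nfL_monomial]
  refine nf_bad τ ρ n (Or.inr ⟨s, by omega, ?_⟩)
  have h2 : (2:ℕ) ^ (n - s) ≤ 2 ^ j := Nat.pow_le_pow_right (by norm_num) (by omega)
  simp only [Finsupp.add_apply, Finsupp.single_apply, if_pos rfl, if_true]
  omega

lemma nfL_mul_rel (τ ρ : k) (n i : ℕ) (q : MvPolynomial MotVar k) :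
    nfL τ ρ n (q * (tP k i ^ 2 -
      (C τ * xP k (i + 1) + C ρ * tP k (i + 1) + C ρ * tP k 0 * xP k (i + 1)))) = 0 := by
  refine nfL_mul_eq_zero_of_monomials τ ρ n _ (fun d => ?_) q
  have e1 : monomial d (1:k) * tP k i ^ 2 = monomial (d + single (Sum.inl i) 2) 1 := by
    rw [tP, MvPolynomial.X_pow_eq_monomial, MvPolynomial.monomial_mul, mul_one]
  have e2 : monomial d (1:k) * (C τ * xP k (i + 1)) =
      monomial (d + single (Sum.inr i) 1) τ := by
    rw [show xP k (i + 1) = X (Sum.inr i) from rfl, X,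
      MvPolynomial.C_mul_monomial, MvPolynomial.monomial_mul, mul_one, one_mul]
  have e3 : monomial d (1:k) * (C ρ * tP k (i + 1)) =
      monomial (d + single (Sum.inl (i + 1)) 1) ρ := by
    rw [tP, X, MvPolynomial.C_mul_monomial, MvPolynomial.monomial_mul, mul_one, one_mul]
  have e4 : monomial d (1:k) * (C ρ * tP k 0 * xP k (i + 1)) =
      monomial (d + (single (Sum.inl 0) 1 + single (Sum.inr i) 1)) ρ := by
    rw [show xP k (i + 1) = X (Sum.inr i) from rfl, tP, X, X,
      MvPolynomial.C_mul_monomial, MvPolynomial.monomial_mul,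
      MvPolynomial.monomial_mul, mul_one, one_mul, mul_one]
  rw [mul_sub, mul_add, mul_add, e1, e2, e3, e4, map_sub, map_add, map_add,
    nfL_monomial, nfL_monomial', nfL_monomial', nfL_monomial']
  have hge : 2 ≤ (d + single (Sum.inl i) 2 : MotVar →₀ ℕ) (Sum.inl i) := by
    simp [Finsupp.single_apply]
  have hsub : (d + single (Sum.inl i) 2 : MotVar →₀ ℕ) - single (Sum.inl i) 2 = d := by
    ext a; simp [Finsupp.tsub_apply]
  have := nf_rewrite τ ρ n (d + single (Sum.inl i) 2) i hge
  rw [hsub] at this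
  rw [this]
  abel

lemma nfL_span (τ ρ : k) (n : ℕ) (S : Set (MvPolynomial MotVar k))
    (hS : ∀ g ∈ S, ∀ q, nfL τ ρ n (q * g) = 0) :
    ∀ x ∈ Ideal.span S, nfL τ ρ n x = 0 := by
  intro x hx
  have key : ∀ x ∈ Ideal.span S, ∀ q, nfL τ ρ n (q * x) = 0 := by
    intro x hx
    induction hx using Submodule.span_induction with
    | mem g hg => exact hS g hg
    | zero => intro q; simp
    | add a b _ _ ha hb => intro q; rw [mul_add, map_add, ha, hb, add_zero]
    | smul a x _ hx =>
        intro q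
        rw [smul_eq_mul, ← mul_assoc]
        exact hx (q * a)
  have := key x hx 1
  simpa using this



def mkk (τ ρ : k) (n : ℕ) : MvPolynomial MotVar k →ₗ[k] Cn k τ ρ n :=
  ((Ideal.Quotient.mkₐ k (Jideal k τ ρ n)).comp
    (Ideal.Quotient.mkₐ k (relIdeal k τ ρ))).toLinearMap

lemma mkk_apply (τ ρ : k) (n : ℕ) (x : MvPolynomial MotVar k) :
    mkk τ ρ n x = Ideal.Quotient.mk (Jideal k τ ρ n) (mkDSA k τ ρ x) := rfl

/-- The candidate basis vectors. -/
def bv (τ ρ : k) (n : ℕ) (p : IdxC n) : Cn k τ ρ n :=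
  Ideal.Quotient.mk (Jideal k τ ρ n) (mkDSA k τ ρ (monP k p.1.1 p.1.2))

lemma monP_eq (E R : ℕ →₀ ℕ) : monP k E R = monomial (toMV E R) (1 : k) := by
  have hE : (E.prod fun i e => tP k i ^ e) = monomial (E.mapDomain Sum.inl) (1 : k) := by
    rw [MvPolynomial.monomial_eq, map_one, one_mul,
      Finsupp.prod_mapDomain_index_inj Sum.inl_injective]
    rfl
  have hR : (R.prod fun i r => xP k (i + 1) ^ r) = monomial (R.mapDomain Sum.inr) (1 : k) := by
    rw [MvPolynomial.monomial_eq, map_one, one_mul,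
      Finsupp.prod_mapDomain_index_inj Sum.inr_injective]
    rfl
  rw [monP, hE, hR, MvPolynomial.monomial_mul, mul_one]
  rfl

lemma nf_toMV (τ ρ : k) (n : ℕ) (p : IdxC n) :
    nf τ ρ n (toMV p.1.1 p.1.2) = single p 1 := by
  obtain ⟨⟨E, R⟩, hE1, hE2, hR⟩ := p
  have h0 : ¬ Bad n (toMV E R) := by
    rintro (⟨m, hm, hne⟩ | ⟨s, hs, hle⟩)
    · rw [toMV_inl] at hne; exact hne (hE2 m hm)
    · rw [toMV_inr] at hle
      have h' : R s < 2 ^ (n - s) := hR s hs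
      omega
  have h1 : ¬ ∃ i, 2 ≤ toMV E R (Sum.inl i) := by
    rintro ⟨i, hi⟩
    rw [toMV_inl] at hi
    have h' : E i ≤ 1 := hE1 i
    omega
  rw [nf_red τ ρ n h0 h1]
  congr 1
  apply Subtype.ext
  simp only [redIdx]
  refine Prod.ext ?_ ?_ <;> ext i
  · simp [toMV_inl]
  · simp [toMV_inr]

set_option maxHeartbeats 1000000 in
lemma mkk_monomial (τ ρ : k) (n : ℕ) (d : MotVar →₀ ℕ) :
    mkk τ ρ n (monomial d (1 : k)) =
      Finsupp.linearCombination k (bv τ ρ n) (nf τ ρ n d) := by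
  classical
  suffices H : ∀ N (d : MotVar →₀ ℕ), wt d ≤ N →
      mkk τ ρ n (monomial d (1 : k)) =
      Finsupp.linearCombination k (bv τ ρ n) (nf τ ρ n d) by
    exact H (wt d) d le_rfl
  intro N
  induction N using Nat.strong_induction_on with
  | _ N IH =>
  intro d hN
  by_cases h0 : Bad n d
  · rw [nf_bad _ _ _ h0, map_zero, mkk_apply, Ideal.Quotient.eq_zero_iff_mem]
    rcases h0 with ⟨m, hm, hne⟩ | ⟨s, hs, hle⟩
    · have hd : monomial d (1 : k)
          = monomial (d - single (Sum.inl m) 1) 1 * tP k m := by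
        rw [tP, X, MvPolynomial.monomial_mul, mul_one,
          sub_add_cancel_of_le (Finsupp.single_le_iff.mpr (by omega))]
      rw [hd, map_mul]
      exact Ideal.mul_mem_left _ _
        (Ideal.subset_span (Or.inl ⟨m, by omega, rfl⟩))
    · have hd : monomial d (1 : k)
          = monomial (d - single (Sum.inr s) (2 ^ (n - s))) 1 * xP k (s + 1) ^ 2 ^ (n - s) := by
        rw [show xP k (s + 1) = X (Sum.inr s) from rfl, MvPolynomial.X_pow_eq_monomial,
          MvPolynomial.monomial_mul, mul_one,
          sub_add_cancel_of_le (Finsupp.single_le_iff.mpr hle)]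
      rw [hd, map_mul]
      exact Ideal.mul_mem_left _ _
        (Ideal.subset_span (Or.inr ⟨s + 1, n - s, by omega, by omega, rfl⟩))
  · by_cases h : ∃ i, 2 ≤ d (Sum.inl i)
    · obtain ⟨i, hi⟩ := h
      -- expand nf via nf_rewrite, and monomial via the relation
      rw [nf_rewrite τ ρ n d i hi]
      set c := d - single (Sum.inl i) 2 with hc
      have hd : monomial d (1 : k) = monomial c 1 * tP k i ^ 2 := by
        rw [tP, MvPolynomial.X_pow_eq_monomial, MvPolynomial.monomial_mul, mul_one, hc,
          sub_add_cancel_of_le (Finsupp.single_le_iff.mpr hi)]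
      have hrel : mkDSA k τ ρ (tP k i ^ 2)
          = mkDSA k τ ρ (C τ * xP k (i + 1) + C ρ * tP k (i + 1)
              + C ρ * tP k 0 * xP k (i + 1)) := by
        rw [mkDSA, Ideal.Quotient.mk_eq_mk_iff_sub_mem]
        exact Ideal.subset_span ⟨i, rfl⟩
      have e2 : monomial c (1:k) * (C τ * xP k (i + 1)) =
          τ • monomial (c + single (Sum.inr i) 1) (1:k) := by
        rw [show xP k (i + 1) = X (Sum.inr i) from rfl, X,
          MvPolynomial.C_mul_monomial, MvPolynomial.monomial_mul,
          MvPolynomial.smul_monomial]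
        simp
      have e3 : monomial c (1:k) * (C ρ * tP k (i + 1)) =
          ρ • monomial (c + single (Sum.inl (i + 1)) 1) (1:k) := by
        rw [tP, X, MvPolynomial.C_mul_monomial, MvPolynomial.monomial_mul,
          MvPolynomial.smul_monomial]
        simp
      have e4 : monomial c (1:k) * (C ρ * tP k 0 * xP k (i + 1)) =
          ρ • monomial (c + (single (Sum.inl 0) 1 + single (Sum.inr i) 1)) (1:k) := by
        rw [show xP k (i + 1) = X (Sum.inr i) from rfl, tP, X, X,
          MvPolynomial.C_mul_monomial, MvPolynomial.monomial_mul,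
          MvPolynomial.monomial_mul, MvPolynomial.smul_monomial]
        simp
      have expand : monomial c (1:k) * (C τ * xP k (i + 1) + C ρ * tP k (i + 1)
            + C ρ * tP k 0 * xP k (i + 1)) =
          τ • monomial (c + single (Sum.inr i) 1) (1:k)
          + ρ • monomial (c + single (Sum.inl (i + 1)) 1) (1:k)
          + ρ • monomial (c + (single (Sum.inl 0) 1 + single (Sum.inr i) 1)) (1:k) := by
        rw [mul_add, mul_add, e2, e3, e4]
      have key : mkDSA k τ ρ (monomial d (1:k)) =
          mkDSA k τ ρ (monomial c 1 * (C τ * xP k (i + 1) + C ρ * tP k (i + 1)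
            + C ρ * tP k 0 * xP k (i + 1))) := by
        rw [hd, map_mul, map_mul, hrel]
      have hmk : mkk τ ρ n (monomial d (1:k)) =
          τ • mkk τ ρ n (monomial (c + single (Sum.inr i) 1) 1)
          + ρ • mkk τ ρ n (monomial (c + single (Sum.inl (i + 1)) 1) 1)
          + ρ • mkk τ ρ n (monomial (c + (single (Sum.inl 0) 1 + single (Sum.inr i) 1)) 1) := by
        have key2 : mkk τ ρ n (monomial d (1:k)) =
            mkk τ ρ n (monomial c 1 * (C τ * xP k (i + 1) + C ρ * tP k (i + 1)
              + C ρ * tP k 0 * xP k (i + 1))) :=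
          congrArg (Ideal.Quotient.mk (Jideal k τ ρ n)) key
        rw [key2, expand, map_add, map_add, map_smul, map_smul, map_smul]
      rw [hmk, map_add, map_add, map_smul, map_smul, map_smul]
      have h6 : ∀ x : MotVar →₀ ℕ, wt x < 6 → wt (c + x) < N :=
        fun x hx => lt_of_lt_of_le (wt_lt hi hx) hN
      rw [IH _ (h6 _ (by rw [wt_single]; simp)) _ le_rfl,
          IH _ (h6 _ (by rw [wt_single]; simp)) _ le_rfl,
          IH _ (h6 _ (by rw [wt_add, wt_single, wt_single]; simp)) _ le_rfl]
    · rw [nf_red τ ρ n h0 h]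
      rw [Finsupp.linearCombination_single]
      rw [one_smul]
      have hb : bv τ ρ n (redIdx n d h0 h)
          = Ideal.Quotient.mk (Jideal k τ ρ n) (mkDSA k τ ρ (monP k (Ep d) (Rp d))) := rfl
      rw [hb, monP_eq, toMV_Ep_Rp]
      rfl



def relFun (τ ρ : k) (i : ℕ) : MvPolynomial MotVar k :=
  tP k i ^ 2 - (C τ * xP k (i + 1) + C ρ * tP k (i + 1) + C ρ * tP k 0 * xP k (i + 1))

lemma relIdeal_eq (τ ρ : k) : relIdeal k τ ρ = Ideal.span (Set.range (relFun τ ρ)) := rfl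

def preJ (K : Type) [CommRing K] (n : ℕ) : Set (MvPolynomial MotVar K) :=
  {x | ∃ m : ℕ, n + 1 ≤ m ∧ x = tP K m} ∪
  {x | ∃ i j : ℕ, 2 ≤ i ∧ n + 1 ≤ i + j ∧ x = xP K i ^ 2 ^ j}

lemma Jideal_eq (τ ρ : k) (n : ℕ) :
    Jideal k τ ρ n = Ideal.map (mkDSA k τ ρ) (Ideal.span (preJ k n)) := by
  have hset : ({x | ∃ m : ℕ, n + 1 ≤ m ∧ x = mkDSA k τ ρ (tP k m)} ∪
      {x | ∃ i j : ℕ, 2 ≤ i ∧ n + 1 ≤ i + j ∧ x = mkDSA k τ ρ (xP k i ^ 2 ^ j)})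
      = mkDSA k τ ρ '' preJ k n := by
    ext x
    constructor
    · rintro (⟨m, hm, rfl⟩ | ⟨i, j, hi, hij, rfl⟩)
      · exact ⟨tP k m, Or.inl ⟨m, hm, rfl⟩, rfl⟩
      · exact ⟨xP k i ^ 2 ^ j, Or.inr ⟨i, j, hi, hij, rfl⟩, rfl⟩
    · rintro ⟨y, hy, rfl⟩
      rcases hy with ⟨m, hm, rfl⟩ | ⟨i, j, hi, hij, rfl⟩
      · exact Or.inl ⟨m, hm, rfl⟩
      · exact Or.inr ⟨i, j, hi, hij, rfl⟩
  rw [Jideal, hset, ← Ideal.map_span]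

lemma mkk_eq_zero (τ ρ : k) (n : ℕ) (x : MvPolynomial MotVar k) (hx : mkk τ ρ n x = 0) :
    nfL τ ρ n x = 0 := by
  have h1 : mkDSA k τ ρ x ∈ Jideal k τ ρ n := by
    rw [← Ideal.Quotient.eq_zero_iff_mem]
    exact hx
  rw [Jideal_eq] at h1
  have h2 : x ∈ Ideal.comap (mkDSA k τ ρ) (Ideal.map (mkDSA k τ ρ) (Ideal.span (preJ k n))) :=
    Ideal.mem_comap.mpr h1
  have hsurj : Function.Surjective (mkDSA k τ ρ) := Ideal.Quotient.mk_surjective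
  rw [Ideal.comap_map_of_surjective _ hsurj] at h2
  have hker : Ideal.comap (mkDSA k τ ρ) ⊥ = relIdeal k τ ρ := by
    rw [← RingHom.ker_eq_comap_bot, mkDSA, Ideal.mk_ker]
  rw [hker] at h2
  have hsp : Ideal.span (preJ k n) ⊔ relIdeal k τ ρ
      = Ideal.span (preJ k n ∪ Set.range (relFun τ ρ)) := by
    rw [Ideal.span_union, relIdeal_eq]
  rw [hsp] at h2
  refine nfL_span τ ρ n _ ?_ x h2
  rintro g (hg | ⟨i, rfl⟩) q
  · rcases hg with ⟨m, hm, rfl⟩ | ⟨i, j, hi, hij, rfl⟩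
    · exact nfL_mul_tP τ ρ n m hm q
    · exact nfL_mul_xP τ ρ n i j hi hij q
  · exact nfL_mul_rel τ ρ n i q

lemma lc_single (n : ℕ) (l : IdxC n →₀ k) :
    Finsupp.linearCombination k (fun p : IdxC n => Finsupp.single p (1:k)) l = l := by
  rw [Finsupp.linearCombination_apply]
  have h : (l.sum fun p c => c • Finsupp.single p (1:k))
      = l.sum fun p c => Finsupp.single p c := by
    apply Finsupp.sum_congr
    intro p _
    rw [Finsupp.smul_single, smul_eq_mul, mul_one]
  rw [h, Finsupp.sum_single]



end S5

/-- For every `n ≥ 0`, the images in `C(n)` of the monomials `τ^E ξ^R`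
with `e_s ∈ {0,1}` for `0 ≤ s ≤ n`, `r₁ ≥ 0` arbitrary, and `0 ≤ r_s < 2^{n+1-s}` for
`2 ≤ s ≤ n`, form a basis of `C(n)` as a free `k`-module. -/
theorem statement5 (k : Type) [CommRing k] (h2 : (2 : k) = 0) (τ ρ : k) (n : ℕ) :
    ∃ b : Module.Basis (IdxC n) k (Cn k τ ρ n),
      ∀ p : IdxC n,
        b p = Ideal.Quotient.mk (Jideal k τ ρ n) (mkDSA k τ ρ (monP k p.1.1 p.1.2)) := by
  classical
  let v : IdxC n → Cn k τ ρ n := fun p =>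
    Ideal.Quotient.mk (Jideal k τ ρ n) (mkDSA k τ ρ (monP k p.1.1 p.1.2))
  have hv : v = S5.bv τ ρ n := rfl
  have hli : LinearIndependent k v := by
    rw [linearIndependent_iff]
    intro l hl
    set P := Finsupp.linearCombination k
      (fun p : IdxC n => monomial (S5.toMV p.1.1 p.1.2) (1:k)) l with hP
    have hcomp : (S5.mkk τ ρ n ∘ fun p : IdxC n => monomial (S5.toMV p.1.1 p.1.2) (1:k))
        = v := by
      funext p
      rw [Function.comp_apply, S5.mkk_apply, ← S5.monP_eq]
    have hmkkP : S5.mkk τ ρ n P = 0 := by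
      rw [hP, Finsupp.apply_linearCombination, hcomp]
      exact hl
    have hnfP := S5.mkk_eq_zero τ ρ n P hmkkP
    rw [hP, Finsupp.apply_linearCombination] at hnfP
    have hcomp2 : ((S5.nfL τ ρ n) ∘ fun p : IdxC n => monomial (S5.toMV p.1.1 p.1.2) (1:k))
        = fun p : IdxC n => Finsupp.single p (1:k) := by
      funext p
      rw [Function.comp_apply, S5.nfL_monomial, S5.nf_toMV]
    rw [hcomp2, S5.lc_single] at hnfP
    exact hnfP
  have hspan : ⊤ ≤ Submodule.span k (Set.range v) := by
    rintro x -
    obtain ⟨y, rfl⟩ := Ideal.Quotient.mk_surjective x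
    obtain ⟨q, rfl⟩ := Ideal.Quotient.mk_surjective y
    have hx : Ideal.Quotient.mk (Jideal k τ ρ n) (Ideal.Quotient.mk (relIdeal k τ ρ) q)
        = S5.mkk τ ρ n q := rfl
    rw [hx, q.as_sum, map_sum]
    refine Submodule.sum_mem _ fun d hd => ?_
    have hsm : monomial d (MvPolynomial.coeff d q)
        = (MvPolynomial.coeff d q) • monomial d (1:k) := by
      rw [MvPolynomial.smul_monomial, smul_eq_mul, mul_one]
    rw [hsm, map_smul, S5.mkk_monomial]
    refine Submodule.smul_mem _ _ ?_
    have hmem : Finsupp.linearCombination k (S5.bv τ ρ n) (S5.nf τ ρ n d)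
        ∈ LinearMap.range (Finsupp.linearCombination k (S5.bv τ ρ n)) :=
      LinearMap.mem_range_self _ _
    rw [Finsupp.range_linearCombination] at hmem
    rw [hv]
    exact hmem
  exact ⟨Module.Basis.mk hli hspan, fun p => Module.Basis.mk_apply hli hspan p⟩

end
end

section
/- For every integer n ≥ 0, multiplication by ξ₁^{2^n} is injective on C(n), and the kernel of the canonical surjection C(n) = 𝒜/J(n) → 𝒜/I(n) = A(n) is exactly the principal ideal of C(n) generated by ξ₁^{2^n}; that is, there is a short exact sequence 0 → C(n) →(·ξ₁^{2^n}) C(n) → A(n) → 0. (Underlying module statement of the paper's Lemma producing the short exact sequence of bicomodules, case ℓ = 2.) -/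
open MvPolynomial TensorProduct

set_option synthInstance.maxHeartbeats 1000000
set_option maxHeartbeats 1000000

noncomputable section

variable (k : Type) [CommRing k]

variable (τ ρ : k)

/-- The ideal `I(n) ⊆ 𝒜`, generated by the `τ_m` with `m ≥ n+1` and the `ξᵢ^{2^j}`
with `i ≥ 1`, `j ≥ 0`, `i + j ≥ n+1`. -/
def Iideal (n : ℤ) : Ideal (DSA k τ ρ) :=
  Ideal.span ({x | ∃ m : ℕ, n + 1 ≤ (m : ℤ) ∧ x = mkDSA k τ ρ (tP k m)} ∪
    {x | ∃ i j : ℕ, 1 ≤ i ∧ n + 1 ≤ (i : ℤ) + (j : ℤ) ∧ x = mkDSA k τ ρ (xP k i ^ 2 ^ j)})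

/-- The quotient `A(n) = 𝒜/I(n)`. -/
abbrev An (n : ℤ) : Type := DSA k τ ρ ⧸ Iideal k τ ρ n

namespace S8
abbrev Idx : Type := Finset ℕ × (ℕ →₀ ℕ)
variable (k : Type) [CommRing k]
abbrev MM : Type := Idx →₀ k
def bv (E : Finset ℕ) (R : ℕ →₀ ℕ) : MM k := Finsupp.single (E, R) 1
abbrev xc (n c : ℕ) (R : ℕ →₀ ℕ) : Prop := c = 0 ∨ R c + 2 ≤ 2 ^ (n - c)
def xiF (n c : ℕ) (E : Finset ℕ) (R : ℕ →₀ ℕ) : MM k :=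
  if xc n c R then bv k E (R + Finsupp.single c 1) else 0
variable (τ ρ : k) (n : ℕ)
def tF (i : ℕ) (E : Finset ℕ) (R : ℕ →₀ ℕ) : MM k :=
  if i ≤ n then
    if hi : i ∈ E then
      τ • xiF k n i (E.erase i) R + ρ • tF (i+1) (E.erase i) R +
        ρ • (if xc n i R then tF 0 (E.erase i) (R + Finsupp.single i 1) else 0)
    else bv k (insert i E) R
  else 0
termination_by E.card
decreasing_by all_goals exact Finset.card_erase_lt_of_mem hi
def phi (i : ℕ) (E : Finset ℕ) (R : ℕ →₀ ℕ) : MM k :=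
  τ • xiF k n i E R + ρ • tF k τ ρ n (i+1) E R +
    ρ • (if xc n i R then tF k τ ρ n 0 E (R + Finsupp.single i 1) else 0)
lemma tF_top {i : ℕ} (h : ¬ i ≤ n) (E : Finset ℕ) (R : ℕ →₀ ℕ) : tF k τ ρ n i E R = 0 := by
  rw [tF, if_neg h]
lemma tF_not {i : ℕ} (h : i ≤ n) {E : Finset ℕ} (hi : i ∉ E) (R : ℕ →₀ ℕ) :
    tF k τ ρ n i E R = bv k (insert i E) R := by
  rw [tF, if_pos h, dif_neg hi]
lemma tF_mem {i : ℕ} (h : i ≤ n) {E : Finset ℕ} (hi : i ∈ E) (R : ℕ →₀ ℕ) :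
    tF k τ ρ n i E R = phi k τ ρ n i (E.erase i) R := by
  rw [tF, if_pos h, dif_pos hi]; rfl

-- linear lifts
def lf (f : Idx → MM k) : MM k →ₗ[k] MM k := Finsupp.linearCombination k f

lemma lf_bv (f : Idx → MM k) (E : Finset ℕ) (R : ℕ →₀ ℕ) : lf k f (bv k E R) = f (E, R) := by
  simp [lf, bv]

def Tl (i : ℕ) : MM k →ₗ[k] MM k := lf k (fun p => tF k τ ρ n i p.1 p.2)
def Xl (c : ℕ) : MM k →ₗ[k] MM k := lf k (fun p => xiF k n c p.1 p.2)

lemma Tl_bv (i : ℕ) (E : Finset ℕ) (R : ℕ →₀ ℕ) : Tl k τ ρ n i (bv k E R) = tF k τ ρ n i E R :=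
  lf_bv ..
lemma Xl_bv (c : ℕ) (E : Finset ℕ) (R : ℕ →₀ ℕ) : Xl k n c (bv k E R) = xiF k n c E R :=
  lf_bv ..

lemma Tl_zero {i : ℕ} (h : ¬ i ≤ n) : Tl k τ ρ n i = 0 := by
  apply Finsupp.lhom_ext'
  intro p
  apply LinearMap.ext_ring
  simp [Tl, lf, tF_top k τ ρ n h]

-- xc facts
lemma xc_add_ne {n i c : ℕ} (h : i ≠ c) (R : ℕ →₀ ℕ) :
    xc n i (R + Finsupp.single c 1) ↔ xc n i R := by
  unfold xc
  rw [Finsupp.add_apply, Finsupp.single_apply, if_neg (fun hh => h hh.symm), add_zero]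

lemma xc_swap {n : ℕ} (c i : ℕ) (R : ℕ →₀ ℕ) :
    (xc n c R ∧ xc n i (R + Finsupp.single c 1)) ↔
      (xc n i R ∧ xc n c (R + Finsupp.single i 1)) := by
  rcases eq_or_ne i c with rfl | h
  · tauto
  · rw [xc_add_ne h, xc_add_ne (Ne.symm h)]; tauto

lemma ite_ite_swap {P Q P' Q' : Prop} [Decidable P] [Decidable Q] [Decidable P'] [Decidable Q']
    (h : (P ∧ Q) ↔ (P' ∧ Q')) {x y : MM k} (hxy : x = y) :
    (if P then (if Q then x else 0) else 0) = if P' then (if Q' then y else 0) else 0 := by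
  subst hxy
  split_ifs with h1 h2 h3 h4 h3 h4 <;> tauto

-- expansion of Xl applied to xiF
lemma Xl_xiF_expand (c c' : ℕ) (E : Finset ℕ) (R : ℕ →₀ ℕ) :
    Xl k n c (xiF k n c' E R) =
      if xc n c' R then xiF k n c E (R + Finsupp.single c' 1) else 0 := by
  by_cases h1 : xc n c' R
  · rw [xiF, if_pos h1, Xl_bv, if_pos h1]
  · rw [xiF, if_neg h1, map_zero, if_neg h1]

-- L1 : Ξ-Ξ commute
lemma Xl_xiF (c c' : ℕ) (E : Finset ℕ) (R : ℕ →₀ ℕ) :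
    Xl k n c (xiF k n c' E R) = Xl k n c' (xiF k n c E R) := by
  rw [Xl_xiF_expand, Xl_xiF_expand]
  unfold xiF
  exact ite_ite_swap k (xc_swap c' c R) (by rw [add_right_comm])

lemma Tl_xiF (j c : ℕ) (E : Finset ℕ) (R : ℕ →₀ ℕ) :
    Tl k τ ρ n j (xiF k n c E R) =
      if xc n c R then tF k τ ρ n j E (R + Finsupp.single c 1) else 0 := by
  by_cases h : xc n c R
  · rw [xiF, if_pos h, Tl_bv, if_pos h]
  · rw [xiF, if_neg h, map_zero, if_neg h]

/-- L2 : `Ξ` commutes with `T` (expansion form). -/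
lemma Xl_tF : ∀ (m : ℕ) (E : Finset ℕ), E.card = m → ∀ i c R,
    Xl k n c (tF k τ ρ n i E R) =
      if xc n c R then tF k τ ρ n i E (R + Finsupp.single c 1) else 0 := by
  intro m
  induction m using Nat.strong_induction_on with
  | _ m IH =>
  intro E hE i c R
  by_cases hile : i ≤ n
  · by_cases hi : i ∈ E
    · have hcard : (E.erase i).card < m := hE ▸ Finset.card_erase_lt_of_mem hi
      rw [tF_mem k τ ρ n hile hi]
      have t1 : Xl k n c (xiF k n i (E.erase i) R) =
          if xc n c R then xiF k n i (E.erase i) (R + Finsupp.single c 1) else 0 := by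
        rw [Xl_xiF, Xl_xiF_expand]
      have t2 : Xl k n c (tF k τ ρ n (i+1) (E.erase i) R) =
          if xc n c R then tF k τ ρ n (i+1) (E.erase i) (R + Finsupp.single c 1) else 0 :=
        IH _ hcard _ rfl _ _ _
      have t3 : Xl k n c (if xc n i R then tF k τ ρ n 0 (E.erase i) (R + Finsupp.single i 1) else 0) =
          if xc n c R then (if xc n i (R + Finsupp.single c 1) then
            tF k τ ρ n 0 (E.erase i) (R + Finsupp.single c 1 + Finsupp.single i 1) else 0) else 0 := by
        have e : Xl k n c (if xc n i R then tF k τ ρ n 0 (E.erase i) (R + Finsupp.single i 1) else 0) =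
            if xc n i R then (if xc n c (R + Finsupp.single i 1) then
              tF k τ ρ n 0 (E.erase i) (R + Finsupp.single i 1 + Finsupp.single c 1) else 0) else 0 := by
          by_cases h2 : xc n i R
          · rw [if_pos h2, if_pos h2, IH _ hcard _ rfl _ _ _]
          · rw [if_neg h2, if_neg h2]; exact map_zero _
        rw [e]
        exact ite_ite_swap k (xc_swap i c R) (by rw [add_right_comm])
      rw [phi, map_add, map_add, map_smul, map_smul, map_smul, t1, t2, t3]
      by_cases hc : xc n c R
      · rw [if_pos hc, if_pos hc, if_pos hc, if_pos hc, tF_mem k τ ρ n hile hi, phi]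
      · simp [hc]
    · rw [tF_not k τ ρ n hile hi, Xl_bv, xiF]
      by_cases hc : xc n c R
      · rw [if_pos hc, if_pos hc, tF_not k τ ρ n hile hi]
      · rw [if_neg hc, if_neg hc]
  · rw [tF_top k τ ρ n hile, map_zero]
    rw [tF_top k τ ρ n hile, ite_self]

lemma ite_add_zero {P : Prop} [Decidable P] (x y : MM k) :
    (if P then x + y else 0) = (if P then x else 0) + (if P then y else 0) := by
  split_ifs <;> simp

lemma ite_smul_zero {P : Prop} [Decidable P] (c : k) (x : MM k) :
    (if P then c • x else 0) = c • (if P then x else 0) := by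
  split_ifs <;> simp

/-- L3 : the `T`-operators commute. -/
lemma Tl_tF : ∀ (m : ℕ) (E : Finset ℕ), E.card = m → ∀ i j R,
    Tl k τ ρ n i (tF k τ ρ n j E R) = Tl k τ ρ n j (tF k τ ρ n i E R) := by
  intro m
  induction m using Nat.strong_induction_on with
  | _ m IH =>
  intro E hE i j R
  rcases eq_or_ne i j with rfl | hij
  · rfl
  have S3 : ∀ (E' : Finset ℕ), E'.card < m → ∀ (a b : ℕ) (X : ℕ →₀ ℕ),
      Tl k τ ρ n b (phi k τ ρ n a E' X) =
        τ • (if xc n a X then tF k τ ρ n b E' (X + Finsupp.single a 1) else 0)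
        + ρ • (Tl k τ ρ n (a+1) (tF k τ ρ n b E' X))
        + ρ • (if xc n a X then Tl k τ ρ n 0 (tF k τ ρ n b E' (X + Finsupp.single a 1)) else 0) := by
    intro E' hlt a b X
    rw [phi, map_add, map_add, map_smul, map_smul, map_smul, Tl_xiF]
    congr 1
    · congr 1
      rw [IH _ hlt _ rfl]
    · by_cases h : xc n a X
      · rw [if_pos h, if_pos h, IH _ hlt _ rfl]
      · rw [if_neg h, if_neg h, map_zero]
  have S1 : ∀ (E' : Finset ℕ), E'.card < m → ∀ (a b : ℕ) (X : ℕ →₀ ℕ), b ≤ n → b ∉ E' →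
      Tl k τ ρ n b (phi k τ ρ n a E' X) = phi k τ ρ n a (insert b E') X := by
    intro E' hlt a b X hb hbE
    rw [S3 E' hlt a b X, tF_not k τ ρ n hb hbE, tF_not k τ ρ n hb hbE, Tl_bv, Tl_bv, phi, xiF]
  by_cases hile : i ≤ n
  swap
  · rw [Tl_zero k τ ρ n hile, tF_top k τ ρ n hile, map_zero, LinearMap.zero_apply]
  by_cases hjle : j ≤ n
  swap
  · rw [Tl_zero k τ ρ n hjle, tF_top k τ ρ n hjle, map_zero, LinearMap.zero_apply]
  by_cases hiE : i ∈ E <;> by_cases hjE : j ∈ E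
  · -- the big symmetric case
    have hiEb : i ∈ E.erase j := Finset.mem_erase.2 ⟨hij, hiE⟩
    have hjEa : j ∈ E.erase i := Finset.mem_erase.2 ⟨Ne.symm hij, hjE⟩
    have hcb : (E.erase j).card < m := hE ▸ Finset.card_erase_lt_of_mem hjE
    have hca : (E.erase i).card < m := hE ▸ Finset.card_erase_lt_of_mem hiE
    have hcd : ((E.erase j).erase i).card < m :=
      lt_trans (Finset.card_erase_lt_of_mem hiEb) hcb
    rw [tF_mem k τ ρ n hjle hjE, tF_mem k τ ρ n hile hiE,
      S3 _ hcb j i R, S3 _ hca i j R,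
      tF_mem k τ ρ n hile hiEb, tF_mem k τ ρ n hile hiEb,
      tF_mem k τ ρ n hjle hjEa, tF_mem k τ ρ n hjle hjEa,
      Finset.erase_right_comm (s := E) (a := i) (b := j),
      S3 _ hcd i (j+1) R, S3 _ hcd i 0 (R + Finsupp.single j 1),
      S3 _ hcd j (i+1) R, S3 _ hcd j 0 (R + Finsupp.single i 1)]
    simp only [phi, xiF, ite_add_zero k, ite_smul_zero k, smul_add, smul_smul]
    have e1 : Tl k τ ρ n (j+1) (tF k τ ρ n (i+1) ((E.erase j).erase i) R) = Tl k τ ρ n (i+1) (tF k τ ρ n (j+1) ((E.erase j).erase i) R) :=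
      IH _ hcd _ rfl (j+1) (i+1) R
    have e2 : Tl k τ ρ n 0 (tF k τ ρ n (i+1) ((E.erase j).erase i) (R + Finsupp.single j 1)) =
        Tl k τ ρ n (i+1) (tF k τ ρ n 0 ((E.erase j).erase i) (R + Finsupp.single j 1)) :=
      IH _ hcd _ rfl 0 (i+1) _
    have e3 : Tl k τ ρ n 0 (tF k τ ρ n (j+1) ((E.erase j).erase i) (R + Finsupp.single i 1)) =
        Tl k τ ρ n (j+1) (tF k τ ρ n 0 ((E.erase j).erase i) (R + Finsupp.single i 1)) :=
      IH _ hcd _ rfl 0 (j+1) _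
    have sw1 : (if xc n i R then (if xc n j (R + Finsupp.single i 1) then
          bv k ((E.erase j).erase i) (R + Finsupp.single i 1 + Finsupp.single j 1) else 0) else 0) =
        (if xc n j R then (if xc n i (R + Finsupp.single j 1) then
          bv k ((E.erase j).erase i) (R + Finsupp.single j 1 + Finsupp.single i 1) else 0) else 0) :=
      ite_ite_swap k (xc_swap i j R) (by rw [add_right_comm])
    have sw2 : (if xc n i R then (if xc n j (R + Finsupp.single i 1) then
          tF k τ ρ n 0 ((E.erase j).erase i) (R + Finsupp.single i 1 + Finsupp.single j 1) else 0) else 0) =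
        (if xc n j R then (if xc n i (R + Finsupp.single j 1) then
          tF k τ ρ n 0 ((E.erase j).erase i) (R + Finsupp.single j 1 + Finsupp.single i 1) else 0) else 0) :=
      ite_ite_swap k (xc_swap i j R) (by rw [add_right_comm])
    have sw3 : (if xc n i R then (if xc n j (R + Finsupp.single i 1) then
          Tl k τ ρ n 0 (tF k τ ρ n 0 ((E.erase j).erase i) (R + Finsupp.single i 1 + Finsupp.single j 1)) else 0) else 0) =
        (if xc n j R then (if xc n i (R + Finsupp.single j 1) then
          Tl k τ ρ n 0 (tF k τ ρ n 0 ((E.erase j).erase i) (R + Finsupp.single j 1 + Finsupp.single i 1)) else 0) else 0) :=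
      ite_ite_swap k (xc_swap i j R) (by rw [add_right_comm])
    rw [e1, e2, ← e3, sw1, sw2, sw3]
    module
  · -- i ∈ E, j ∉ E
    have hcard : (E.erase i).card < m := hE ▸ Finset.card_erase_lt_of_mem hiE
    rw [tF_not k τ ρ n hjle hjE, Tl_bv, tF_mem k τ ρ n hile (Finset.mem_insert_of_mem hiE),
      Finset.erase_insert_of_ne (Ne.symm hij), tF_mem k τ ρ n hile hiE,
      S1 _ hcard i j R hjle (fun hc => hjE (Finset.mem_of_mem_erase hc))]
  · -- i ∉ E, j ∈ E
    have hcard : (E.erase j).card < m := hE ▸ Finset.card_erase_lt_of_mem hjE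
    rw [tF_not k τ ρ n hile hiE, Tl_bv, tF_mem k τ ρ n hjle (Finset.mem_insert_of_mem hjE),
      Finset.erase_insert_of_ne hij, tF_mem k τ ρ n hjle hjE,
      S1 _ hcard j i R hile (fun hc => hiE (Finset.mem_of_mem_erase hc))]
  · -- i ∉ E, j ∉ E
    rw [tF_not k τ ρ n hjle hjE, Tl_bv, tF_not k τ ρ n hile hiE, Tl_bv,
      tF_not k τ ρ n hile (fun hc => hiE (Finset.mem_of_mem_insert_of_ne hc hij)),
      tF_not k τ ρ n hjle (fun hc => hjE (Finset.mem_of_mem_insert_of_ne hc (Ne.symm hij))),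
      Finset.insert_comm]

/-- the operator family -/
def opf (v : MotVar) : Module.End k (MM k) :=
  match v with
  | Sum.inl i => Tl k τ ρ n i
  | Sum.inr c => Xl k n c

@[simp] lemma opf_inl (i : ℕ) : opf k τ ρ n (Sum.inl i) = Tl k τ ρ n i := rfl
@[simp] lemma opf_inr (c : ℕ) : opf k τ ρ n (Sum.inr c) = Xl k n c := rfl

lemma opf_comm (v w : MotVar) :
    opf k τ ρ n v * opf k τ ρ n w = opf k τ ρ n w * opf k τ ρ n v := by
  apply Finsupp.lhom_ext'
  intro a
  apply LinearMap.ext_ring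
  have key : ∀ x y : MotVar, (opf k τ ρ n x) ((opf k τ ρ n y) (bv k a.1 a.2)) =
      (opf k τ ρ n y) ((opf k τ ρ n x) (bv k a.1 a.2)) := by
    intro x y
    match x, y with
    | Sum.inl i, Sum.inl j =>
      simp only [opf_inl, Tl_bv]
      exact Tl_tF k τ ρ n a.1.card a.1 rfl i j a.2
    | Sum.inl i, Sum.inr c =>
      simp only [opf_inl, opf_inr, Tl_bv, Xl_bv]
      rw [Tl_xiF, Xl_tF k τ ρ n a.1.card a.1 rfl]
    | Sum.inr c, Sum.inl i =>
      simp only [opf_inl, opf_inr, Tl_bv, Xl_bv]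
      rw [Tl_xiF, Xl_tF k τ ρ n a.1.card a.1 rfl]
    | Sum.inr c, Sum.inr c' =>
      simp only [opf_inr, Xl_bv]
      exact Xl_xiF k n c c' a.1 a.2
  simp only [LinearMap.comp_apply, Finsupp.lsingle_apply, Module.End.mul_apply]
  exact key v w

def Acomm : Subalgebra k (Module.End k (MM k)) := Algebra.adjoin k (Set.range (opf k τ ρ n))

set_option maxHeartbeats 4000000 in
noncomputable instance AcommCR : CommSemiring (Acomm k τ ρ n) :=
  Algebra.adjoinCommSemiringOfComm k (by
    rintro a ⟨v, rfl⟩ b ⟨w, rfl⟩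
    exact opf_comm k τ ρ n v w)

noncomputable instance AcommAlg :
    @Algebra k (Acomm k τ ρ n) _ (@CommSemiring.toSemiring _ (AcommCR k τ ρ n)) :=
  Subalgebra.algebra _

def θ : MvPolynomial MotVar k →ₐ[k] Acomm k τ ρ n :=
  MvPolynomial.aeval (fun v =>
    (⟨opf k τ ρ n v, Algebra.subset_adjoin (Set.mem_range_self v)⟩ : Acomm k τ ρ n))
def act : MvPolynomial MotVar k →ₐ[k] Module.End k (MM k) :=
  (Subalgebra.val _).comp (θ k τ ρ n)

lemma act_X (v : MotVar) : act k τ ρ n (X v) = opf k τ ρ n v := by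
  rw [act, AlgHom.comp_apply, θ]
  exact congrArg (Acomm k τ ρ n).val (MvPolynomial.aeval_X _ v)

def one0 : MM k := bv k ∅ 0

def phiM (p : MvPolynomial MotVar k) : MM k := act k τ ρ n p (one0 k)

lemma phiM_mul (p q : MvPolynomial MotVar k) :
    phiM k τ ρ n (p * q) = act k τ ρ n p (phiM k τ ρ n q) := by
  rw [phiM, map_mul, Module.End.mul_apply, phiM]

lemma phiM_add (p q : MvPolynomial MotVar k) :
    phiM k τ ρ n (p + q) = phiM k τ ρ n p + phiM k τ ρ n q := by
  rw [phiM, map_add, LinearMap.add_apply, phiM, phiM]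

lemma phiM_C (r : k) (p : MvPolynomial MotVar k) :
    phiM k τ ρ n (C r * p) = r • phiM k τ ρ n p := by
  rw [phiM_mul, ← MvPolynomial.algebraMap_eq, AlgHom.commutes, Module.algebraMap_end_apply]

/-! ### the comparison map `ψ` -/

def mon (E : Finset ℕ) (R : ℕ →₀ ℕ) : MvPolynomial MotVar k :=
  (∏ i ∈ E, tP k i) * (R.prod fun c r => X (Sum.inr c) ^ r)

lemma xP_succ (c : ℕ) : xP k (c + 1) = X (Sum.inr c) := rfl

def πC : MvPolynomial MotVar k →ₐ[k] Cn k τ ρ n :=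
  (Ideal.Quotient.mkₐ k (Jideal k τ ρ n)).comp (Ideal.Quotient.mkₐ k (relIdeal k τ ρ))

lemma πC_eq (p : MvPolynomial MotVar k) :
    πC k τ ρ n p = Ideal.Quotient.mk (Jideal k τ ρ n) (mkDSA k τ ρ p) := rfl

lemma πC_surj : Function.Surjective (πC k τ ρ n) := by
  intro x
  obtain ⟨y, rfl⟩ := Ideal.Quotient.mk_surjective x
  obtain ⟨p, rfl⟩ := Ideal.Quotient.mk_surjective y
  exact ⟨p, rfl⟩

lemma mon_empty_zero : mon k (∅ : Finset ℕ) 0 = 1 := by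
  rw [mon, Finset.prod_empty, Finsupp.prod_zero_index, one_mul]

lemma mon_add_single (E : Finset ℕ) (R : ℕ →₀ ℕ) (c m : ℕ) :
    mon k E (R + Finsupp.single c m) = X (Sum.inr c) ^ m * mon k E R := by
  rw [mon, mon, Finsupp.prod_add_index' (h_zero := fun a => pow_zero _)
    (h_add := fun a b₁ b₂ => pow_add _ _ _),
    Finsupp.prod_single_index (h := fun a r => X (Sum.inr a) ^ r) (pow_zero _)]
  ring

lemma mon_insert {i : ℕ} {E : Finset ℕ} (hiE : i ∉ E) (R : ℕ →₀ ℕ) :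
    mon k (insert i E) R = tP k i * mon k E R := by
  rw [mon, mon, Finset.prod_insert hiE, mul_assoc]

lemma mon_mem {i : ℕ} {E : Finset ℕ} (hiE : i ∈ E) (R : ℕ →₀ ℕ) :
    mon k E R = tP k i * mon k (E.erase i) R := by
  rw [mon, mon, ← Finset.mul_prod_erase E _ hiE, mul_assoc]

lemma pi_kill {c : ℕ} {R : ℕ →₀ ℕ} (hb : ¬ xc n c R) (E : Finset ℕ) :
    πC k τ ρ n (X (Sum.inr c) * mon k E R) = 0 := by
  rw [not_or] at hb
  obtain ⟨hc, hle⟩ := hb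
  have h1 : X (Sum.inr c) * mon k E R = mon k E (R + Finsupp.single c 1) := by
    rw [mon_add_single, pow_one]
  have h2 : R + Finsupp.single c 1 =
      ((R + Finsupp.single c 1).erase c) + Finsupp.single c (R c + 1) := by
    have := Finsupp.erase_add_single c (R + Finsupp.single c 1)
    rw [Finsupp.add_apply, Finsupp.single_eq_same] at this
    exact this.symm
  have hr : 2 ^ (n - c) ≤ R c + 1 := by omega
  have h3 : mon k E (R + Finsupp.single c 1) =
      xP k (c + 1) ^ 2 ^ (n - c) *
        (X (Sum.inr c) ^ (R c + 1 - 2 ^ (n - c)) * mon k E ((R + Finsupp.single c 1).erase c)) := by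
    conv_lhs => rw [h2]
    rw [mon_add_single, xP_succ, ← mul_assoc, ← pow_add, Nat.add_sub_cancel' hr]
  rw [h1, h3, πC_eq, Ideal.Quotient.eq_zero_iff_mem, map_mul]
  apply Ideal.mul_mem_right
  apply Ideal.subset_span
  exact Or.inr ⟨c + 1, n - c, by omega, by omega, rfl⟩

def ψ : MM k →ₗ[k] Cn k τ ρ n :=
  Finsupp.linearCombination k (fun p : Idx => πC k τ ρ n (mon k p.1 p.2))

lemma ψ_bv (E : Finset ℕ) (R : ℕ →₀ ℕ) :
    ψ k τ ρ n (bv k E R) = πC k τ ρ n (mon k E R) := by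
  simp [ψ, bv]

lemma ψ_xiF (c : ℕ) (E : Finset ℕ) (R : ℕ →₀ ℕ) :
    ψ k τ ρ n (xiF k n c E R) = πC k τ ρ n (X (Sum.inr c) * mon k E R) := by
  by_cases h : xc n c R
  · rw [xiF, if_pos h, ψ_bv, mon_add_single, pow_one]
  · rw [xiF, if_neg h, map_zero, pi_kill k τ ρ n h]

lemma relq (i : ℕ) : mkDSA k τ ρ (tP k i ^ 2) =
    mkDSA k τ ρ (C τ * xP k (i + 1) + C ρ * tP k (i + 1) + C ρ * tP k 0 * xP k (i + 1)) := by
  rw [mkDSA, Ideal.Quotient.mk_eq_mk_iff_sub_mem]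
  exact Ideal.subset_span (Set.mem_range_self i)

lemma πC_Csmul (r : k) (q : MvPolynomial MotVar k) :
    πC k τ ρ n (C r * q) = r • πC k τ ρ n q := by
  rw [← MvPolynomial.smul_eq_C_mul, map_smul]

lemma πC_t_top {i : ℕ} (h : ¬ i ≤ n) (q : MvPolynomial MotVar k) :
    πC k τ ρ n (tP k i * q) = 0 := by
  rw [πC_eq, Ideal.Quotient.eq_zero_iff_mem, map_mul]
  apply Ideal.mul_mem_right
  exact Ideal.subset_span (Or.inl ⟨i, by omega, rfl⟩)

lemma ψ_tF : ∀ (m : ℕ) (E : Finset ℕ), E.card = m → ∀ i R,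
    ψ k τ ρ n (tF k τ ρ n i E R) = πC k τ ρ n (tP k i * mon k E R) := by
  intro m
  induction m using Nat.strong_induction_on with
  | _ m IH =>
  intro E hE i R
  by_cases hile : i ≤ n
  · by_cases hi : i ∈ E
    · have hcard : (E.erase i).card < m := hE ▸ Finset.card_erase_lt_of_mem hi
      rw [tF_mem k τ ρ n hile hi, phi, map_add, map_add, map_smul, map_smul, map_smul,
        ψ_xiF, IH _ hcard _ rfl]
      have h3 : ψ k τ ρ n (if xc n i R then
            tF k τ ρ n 0 (E.erase i) (R + Finsupp.single i 1) else 0) =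
          πC k τ ρ n (tP k 0 * (X (Sum.inr i) * mon k (E.erase i) R)) := by
        by_cases hx : xc n i R
        · rw [if_pos hx, IH _ hcard _ rfl, mon_add_single, pow_one]
        · rw [if_neg hx, map_zero, map_mul, pi_kill k τ ρ n hx]; exact (mul_zero (πC k τ ρ n (tP k 0))).symm
      rw [h3]
      have e0 : πC k τ ρ n (tP k i ^ 2 * mon k (E.erase i) R) =
          πC k τ ρ n ((C τ * xP k (i + 1) + C ρ * tP k (i + 1) + C ρ * tP k 0 * xP k (i + 1)) *
            mon k (E.erase i) R) := by
        rw [πC_eq, πC_eq]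
        congr 1
        rw [map_mul, map_mul, relq]
      have h5 : (C τ * xP k (i+1) + C ρ * tP k (i+1) + C ρ * tP k 0 * xP k (i+1)) *
          mon k (E.erase i) R =
          C τ * (X (Sum.inr i) * mon k (E.erase i) R) +
          C ρ * (tP k (i+1) * mon k (E.erase i) R) +
          C ρ * (tP k 0 * (X (Sum.inr i) * mon k (E.erase i) R)) := by
        rw [xP_succ]; ring
      have hR : πC k τ ρ n (tP k i * mon k E R) =
          τ • πC k τ ρ n (X (Sum.inr i) * mon k (E.erase i) R)
          + ρ • πC k τ ρ n (tP k (i+1) * mon k (E.erase i) R)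
          + ρ • πC k τ ρ n (tP k 0 * (X (Sum.inr i) * mon k (E.erase i) R)) := by
        rw [mon_mem k hi R, show tP k i * (tP k i * mon k (E.erase i) R) =
            tP k i ^ 2 * mon k (E.erase i) R from by ring, e0, h5, map_add, map_add,
          πC_Csmul, πC_Csmul, πC_Csmul]
      rw [hR]
    · rw [tF_not k τ ρ n hile hi, ψ_bv, mon_insert k hi]
  · rw [tF_top k τ ρ n hile, map_zero, πC_t_top k τ ρ n hile]

lemma ψ_opf (v : MotVar) (x : MM k) :
    ψ k τ ρ n (opf k τ ρ n v x) = πC k τ ρ n (X v) * ψ k τ ρ n x := by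
  have : (ψ k τ ρ n) ∘ₗ (opf k τ ρ n v) =
      (LinearMap.mulLeft k (πC k τ ρ n (X v))) ∘ₗ (ψ k τ ρ n) := by
    apply Finsupp.lhom_ext'
    intro a
    apply LinearMap.ext_ring
    simp only [LinearMap.comp_apply, Finsupp.lsingle_apply, LinearMap.mulLeft_apply]
    have hb : (Finsupp.single a (1:k) : MM k) = bv k a.1 a.2 := rfl
    rw [hb, ψ_bv]
    match v with
    | Sum.inl i =>
      rw [opf_inl, Tl_bv, ψ_tF k τ ρ n a.1.card a.1 rfl, map_mul]; rfl
    | Sum.inr c =>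
      rw [opf_inr, Xl_bv, ψ_xiF, map_mul]
  have h2 := congrArg (fun f : MM k →ₗ[k] Cn k τ ρ n => f x) this
  simpa using h2

lemma ψ_one0 : ψ k τ ρ n (one0 k) = 1 := by
  rw [one0, ψ_bv, mon_empty_zero, map_one]

lemma ψ_phiM (p : MvPolynomial MotVar k) : ψ k τ ρ n (phiM k τ ρ n p) = πC k τ ρ n p := by
  induction p using MvPolynomial.induction_on with
  | C r =>
    have h1 : phiM k τ ρ n (C r) = r • one0 k := by
      rw [phiM, ← MvPolynomial.algebraMap_eq, AlgHom.commutes, Module.algebraMap_end_apply]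
    rw [h1, map_smul, ψ_one0, ← MvPolynomial.algebraMap_eq, AlgHom.commutes,
      Algebra.algebraMap_eq_smul_one]
  | add p q hp hq => rw [phiM_add, map_add, hp, hq, map_add]
  | mul_X p v hp =>
    rw [show p * X v = X v * p from mul_comm _ _, phiM_mul, act_X, ψ_opf, hp, ← map_mul]

/-! ### vanishing of `phiM` on the defining ideals -/

lemma phiM_zero : phiM k τ ρ n 0 = 0 := by rw [phiM, map_zero]; rfl

lemma phiM_span_zero {G : Set (MvPolynomial MotVar k)} (hG : ∀ g ∈ G, phiM k τ ρ n g = 0) :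
    ∀ p ∈ Ideal.span G, phiM k τ ρ n p = 0 := by
  intro p hp
  induction hp using Submodule.span_induction with
  | mem g hg => exact hG g hg
  | zero => exact phiM_zero k τ ρ n
  | add x y _ _ hx hy => rw [phiM_add, hx, hy, add_zero]
  | smul a x _ hx =>
    rw [smul_eq_mul, phiM_mul, hx, map_zero]

lemma phiM_X (v : MotVar) : phiM k τ ρ n (X v) = opf k τ ρ n v (one0 k) := by
  rw [phiM, act_X]

lemma phiM_sub (p q : MvPolynomial MotVar k) :
    phiM k τ ρ n (p - q) = phiM k τ ρ n p - phiM k τ ρ n q := by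
  rw [phiM, map_sub, LinearMap.sub_apply]; rfl

lemma act_t0 : act k τ ρ n (tP k 0) = Tl k τ ρ n 0 := act_X k τ ρ n (Sum.inl 0)

lemma phiM_rel (i : ℕ) : phiM k τ ρ n
    (tP k i ^ 2 - (C τ * xP k (i + 1) + C ρ * tP k (i + 1) + C ρ * tP k 0 * xP k (i + 1))) = 0 := by
  have hsq : phiM k τ ρ n (tP k i ^ 2) = Tl k τ ρ n i (Tl k τ ρ n i (one0 k)) := by
    rw [phiM, map_pow, sq, Module.End.mul_apply]
    have : act k τ ρ n (tP k i) = Tl k τ ρ n i := act_X k τ ρ n (Sum.inl i)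
    rw [this]
  have hb1 : phiM k τ ρ n (C τ * xP k (i + 1)) = τ • xiF k n i ∅ 0 := by
    rw [phiM_C, xP_succ, phiM_X, opf_inr, one0, Xl_bv]
  have hb2 : phiM k τ ρ n (C ρ * tP k (i + 1)) = ρ • tF k τ ρ n (i+1) ∅ 0 := by
    rw [phiM_C, show tP k (i+1) = X (Sum.inl (i+1)) from rfl, phiM_X, opf_inl, one0, Tl_bv]
  have hb3 : phiM k τ ρ n (C ρ * tP k 0 * xP k (i + 1)) =
      ρ • (Tl k τ ρ n 0 (xiF k n i ∅ 0)) := by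
    rw [xP_succ, show C ρ * tP k 0 * X (Sum.inr i) = C ρ * (tP k 0 * X (Sum.inr i)) from by ring,
      phiM_C, phiM_mul, phiM_X, opf_inr, act_t0, one0, Xl_bv]
  rw [phiM_sub, phiM_add, phiM_add, hsq, hb1, hb2, hb3]
  by_cases hile : i ≤ n
  · rw [one0, Tl_bv, tF_not k τ ρ n hile (Finset.notMem_empty i), Tl_bv,
      tF_mem k τ ρ n hile (Finset.mem_insert_self i ∅),
      Finset.erase_insert (Finset.notMem_empty i), phi, Tl_xiF]
    abel
  · have hx : xiF k n i ∅ (0 : ℕ →₀ ℕ) = 0 := by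
      rw [xiF, if_neg]
      rw [not_or]
      constructor
      · omega
      · have h0 : n - i = 0 := by omega
        rw [h0, Finsupp.coe_zero, Pi.zero_apply, pow_zero]
        omega
    rw [one0, Tl_bv, tF_top k τ ρ n hile, map_zero, hx, map_zero, smul_zero, smul_zero,
      tF_top k τ ρ n (fun h => hile (by omega)), smul_zero]
    simp

lemma Xl_pow_zero : ∀ (m c : ℕ), c ≠ 0 → ∀ (E : Finset ℕ) (R : ℕ →₀ ℕ),
    2 ^ (n - c) ≤ R c + m + 1 →
    ((Xl k n c) ^ (m + 1) : Module.End k (MM k)) (bv k E R) = 0 := by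
  intro m
  induction m with
  | zero =>
    intro c hc E R hle
    rw [pow_one, Xl_bv, xiF, if_neg]
    rw [not_or]
    exact ⟨hc, by omega⟩
  | succ m IH =>
    intro c hc E R hle
    rw [pow_succ, Module.End.mul_apply, Xl_bv, xiF]
    by_cases hx : xc n c R
    · rw [if_pos hx]
      apply IH c hc
      rw [Finsupp.add_apply, Finsupp.single_eq_same]
      omega
    · rw [if_neg hx, map_zero]

lemma phiM_tgen {m : ℕ} (hm : n + 1 ≤ m) : phiM k τ ρ n (tP k m) = 0 := by
  rw [show tP k m = X (Sum.inl m) from rfl, phiM_X, opf_inl, one0, Tl_bv,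
    tF_top k τ ρ n (by omega)]

lemma phiM_xgen {i j : ℕ} (hi : 2 ≤ i) (hij : n + 1 ≤ i + j) :
    phiM k τ ρ n (xP k i ^ 2 ^ j) = 0 := by
  obtain ⟨c, rfl⟩ : ∃ c, i = c + 1 := ⟨i - 1, by omega⟩
  rw [phiM, map_pow, xP_succ, act_X, opf_inr]
  obtain ⟨m, hm⟩ : ∃ m, 2 ^ j = m + 1 := ⟨2 ^ j - 1, by have := Nat.one_le_two_pow (n := j); omega⟩
  rw [hm, one0]
  apply Xl_pow_zero k n m c (by omega)
  have h1 : n - c ≤ j := by omega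
  have := Nat.pow_le_pow_right (by norm_num : 1 ≤ 2) h1
  simp only [Finsupp.coe_zero, Pi.zero_apply]
  omega

def GJ : Set (MvPolynomial MotVar k) :=
  {p | ∃ m : ℕ, n + 1 ≤ m ∧ p = tP k m} ∪
    {p | ∃ i j : ℕ, 2 ≤ i ∧ n + 1 ≤ i + j ∧ p = xP k i ^ 2 ^ j}

lemma Jideal_eq_map :
    Jideal k τ ρ n = Ideal.map (mkDSA k τ ρ) (Ideal.span (GJ k n)) := by
  rw [Ideal.map_span, Jideal]
  congr 1
  rw [GJ, Set.image_union]
  congr 1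
  · ext x
    constructor
    · rintro ⟨m, hm, rfl⟩
      exact ⟨tP k m, ⟨m, hm, rfl⟩, rfl⟩
    · rintro ⟨p, ⟨m, hm, rfl⟩, rfl⟩
      exact ⟨m, hm, rfl⟩
  · ext x
    constructor
    · rintro ⟨i, j, hi, hij, rfl⟩
      exact ⟨xP k i ^ 2 ^ j, ⟨i, j, hi, hij, rfl⟩, rfl⟩
    · rintro ⟨p, ⟨i, j, hi, hij, rfl⟩, rfl⟩
      exact ⟨i, j, hi, hij, rfl⟩

lemma phiM_GJ : ∀ g ∈ GJ k n, phiM k τ ρ n g = 0 := by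
  rintro g (⟨m, hm, rfl⟩ | ⟨i, j, hi, hij, rfl⟩)
  · exact phiM_tgen k τ ρ n hm
  · exact phiM_xgen k τ ρ n hi hij

lemma phiM_relIdeal : ∀ p ∈ relIdeal k τ ρ, phiM k τ ρ n p = 0 := by
  apply phiM_span_zero
  rintro g ⟨i, rfl⟩
  exact phiM_rel k τ ρ n i

lemma pi_zero_iff (p : MvPolynomial MotVar k) :
    πC k τ ρ n p = 0 ↔ phiM k τ ρ n p = 0 := by
  constructor
  · intro h
    rw [πC_eq, Ideal.Quotient.eq_zero_iff_mem, Jideal_eq_map] at h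
    obtain ⟨q, hq, hmk⟩ := (Ideal.mem_map_iff_of_surjective _ Ideal.Quotient.mk_surjective).1 h
    have hmk' : mkDSA k τ ρ q = mkDSA k τ ρ p := hmk
    have hrel : p - q ∈ relIdeal k τ ρ := by
      have : mkDSA k τ ρ (p - q) = 0 := by rw [map_sub, hmk', sub_self]
      rwa [mkDSA, Ideal.Quotient.eq_zero_iff_mem] at this
    have h1 : phiM k τ ρ n q = 0 := phiM_span_zero k τ ρ n (phiM_GJ k τ ρ n) q hq
    have h2 : phiM k τ ρ n (p - q) = 0 := phiM_relIdeal k τ ρ n _ hrel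
    have := phiM_add k τ ρ n q (p - q)
    rw [add_sub_cancel, h1, h2, add_zero] at this
    exact this
  · intro h
    rw [← ψ_phiM, h, map_zero]

/-! ### injectivity of multiplication by `ξ₁` on `MM` -/

def linv : MM k →ₗ[k] MM k :=
  lf k (fun p => if p.2 0 = 0 then 0 else bv k p.1 (p.2 - Finsupp.single 0 1))

lemma linv_Xl0 (x : MM k) : linv k (Xl k n 0 x) = x := by
  have : (linv k) ∘ₗ (Xl k n 0) = LinearMap.id := by
    apply Finsupp.lhom_ext'
    intro a
    apply LinearMap.ext_ring
    simp only [LinearMap.comp_apply, Finsupp.lsingle_apply, LinearMap.id_apply]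
    have hb : (Finsupp.single a (1:k) : MM k) = bv k a.1 a.2 := rfl
    rw [hb, Xl_bv, xiF, if_pos (Or.inl rfl), linv, lf_bv]
    rw [if_neg (by simp)]
    rw [add_tsub_cancel_right]
  exact congrArg (fun f : MM k →ₗ[k] MM k => f x) this

lemma Xl0_pow_inj (m : ℕ) :
    Function.Injective ((Xl k n 0 ^ m : Module.End k (MM k)) : MM k → MM k) := by
  induction m with
  | zero => intro x y h; simpa using h
  | succ m IH =>
    intro x y h
    rw [pow_succ', Module.End.mul_apply, Module.End.mul_apply] at h
    have := congrArg (linv k) h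
    rw [linv_Xl0, linv_Xl0] at this
    exact IH this

end S8

theorem statement8' (k : Type) [CommRing k] (h2 : (2 : k) = 0) (τ ρ : k) (n : ℕ) :
    Function.Injective (fun x : Cn k τ ρ n =>
      x * Ideal.Quotient.mk (Jideal k τ ρ n) (mkDSA k τ ρ (xP k 1 ^ 2 ^ n))) ∧
    ∃ φ : Cn k τ ρ n →+* An k τ ρ n,
      (∀ y : DSA k τ ρ,
        φ (Ideal.Quotient.mk (Jideal k τ ρ n) y) = Ideal.Quotient.mk (Iideal k τ ρ n) y) ∧
      Function.Surjective φ ∧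
      RingHom.ker φ =
        Ideal.span {Ideal.Quotient.mk (Jideal k τ ρ n) (mkDSA k τ ρ (xP k 1 ^ 2 ^ n))} := by
  set z : Cn k τ ρ n := Ideal.Quotient.mk (Jideal k τ ρ n) (mkDSA k τ ρ (xP k 1 ^ 2 ^ n)) with hz
  have hzπ : z = S8.πC k τ ρ n (xP k 1 ^ 2 ^ n) := rfl
  have key : ∀ a : Cn k τ ρ n, a * z = 0 → a = 0 := by
    intro a ha
    obtain ⟨p, rfl⟩ := S8.πC_surj k τ ρ n a
    rw [hzπ, ← map_mul,
      show p * xP k 1 ^ 2 ^ n = xP k 1 ^ 2 ^ n * p from mul_comm _ _] at ha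
    rw [S8.pi_zero_iff, S8.phiM_mul, map_pow,
      show S8.act k τ ρ n (xP k 1) = S8.Xl k n 0 from S8.act_X k τ ρ n (Sum.inr 0)] at ha
    have h0 : S8.phiM k τ ρ n p = 0 :=
      S8.Xl0_pow_inj k n (2 ^ n) (by rw [ha, map_zero])
    exact (S8.pi_zero_iff k τ ρ n p).2 h0
  constructor
  · intro a b hab
    have h0 : (a - b) * z = 0 := by
      calc (a - b) * z = a * z - b * z := sub_mul a b z
        _ = 0 := sub_eq_zero.2 hab
    have := key _ h0
    rwa [sub_eq_zero] at this
  · have hle : Jideal k τ ρ n ≤ Iideal k τ ρ n := by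
      rw [Jideal]
      apply Ideal.span_le.2
      rintro x (⟨m, hm, rfl⟩ | ⟨i, j, hi, hij, rfl⟩)
      · exact Ideal.subset_span (Or.inl ⟨m, by push_cast; omega, rfl⟩)
      · exact Ideal.subset_span (Or.inr ⟨i, j, by omega, by push_cast; omega, rfl⟩)
    refine ⟨Ideal.Quotient.lift _ (Ideal.Quotient.mk (Iideal k τ ρ n))
      (fun a ha => Ideal.Quotient.eq_zero_iff_mem.2 (hle ha)), fun y => rfl, ?_, ?_⟩
    · intro b
      obtain ⟨y, rfl⟩ := Ideal.Quotient.mk_surjective b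
      exact ⟨Ideal.Quotient.mk _ y, rfl⟩
    · apply le_antisymm
      · intro x hx
        obtain ⟨y, rfl⟩ := Ideal.Quotient.mk_surjective x
        have hy : y ∈ Iideal k τ ρ n := by
          rw [RingHom.mem_ker, Ideal.Quotient.lift_mk, Ideal.Quotient.eq_zero_iff_mem] at hx
          exact hx
        have hmem : Ideal.Quotient.mk (Jideal k τ ρ n) y ∈
            Ideal.map (Ideal.Quotient.mk (Jideal k τ ρ n)) (Iideal k τ ρ n) :=
          Ideal.mem_map_of_mem _ hy
        refine Set.mem_of_mem_of_subset hmem ?_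
        show Ideal.map (Ideal.Quotient.mk (Jideal k τ ρ n)) (Iideal k τ ρ n) ≤ Ideal.span {z}
        rw [Iideal, Ideal.map_span]
        apply Ideal.span_le.2
        rintro w ⟨x, hx, rfl⟩
        rcases hx with ⟨m, hm, rfl⟩ | ⟨i, j, hi, hij, rfl⟩
        · have hmem2 : mkDSA k τ ρ (tP k m) ∈ Jideal k τ ρ n :=
            Ideal.subset_span (Or.inl ⟨m, by exact_mod_cast hm, rfl⟩)
          rw [SetLike.mem_coe, Ideal.Quotient.eq_zero_iff_mem.2 hmem2]
          exact Ideal.zero_mem _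
        · by_cases h2i : 2 ≤ i
          · have hij' : n + 1 ≤ i + j := by exact_mod_cast hij
            have hmem2 : mkDSA k τ ρ (xP k i ^ 2 ^ j) ∈ Jideal k τ ρ n :=
              Ideal.subset_span (Or.inr ⟨i, j, h2i, hij', rfl⟩)
            rw [SetLike.mem_coe, Ideal.Quotient.eq_zero_iff_mem.2 hmem2]
            exact Ideal.zero_mem _
          · have hi1 : i = 1 := by omega
            subst hi1
            have hj : n ≤ j := by
              have : (n : ℤ) + 1 ≤ 1 + j := by push_cast at hij ⊢; omega
              omega
            have hsplit : xP k 1 ^ 2 ^ j = xP k 1 ^ 2 ^ n * xP k 1 ^ (2 ^ j - 2 ^ n) := by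
              rw [← pow_add, Nat.add_sub_cancel' (Nat.pow_le_pow_right (by norm_num) hj)]
            rw [SetLike.mem_coe, hsplit, map_mul, map_mul]
            exact (Ideal.mem_span_singleton (α := Cn k τ ρ n)).2 (dvd_mul_right z _)
      · apply Ideal.span_le.2
        intro w hw
        rw [Set.mem_singleton_iff] at hw
        subst hw
        rw [SetLike.mem_coe, RingHom.mem_ker, hz, Ideal.Quotient.lift_mk,
          Ideal.Quotient.eq_zero_iff_mem]
        exact Ideal.subset_span (Or.inr ⟨1, n, le_refl 1, by push_cast; omega, rfl⟩)


/-- For every `n ≥ 0`, multiplication by `ξ₁^{2^n}` is injective on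
`C(n)`, and the kernel of the canonical surjection `C(n) = 𝒜/J(n) → 𝒜/I(n) = A(n)`
(the unique ring homomorphism `φ` with `φ ∘ π′_n = π_n`) is exactly the principal ideal
of `C(n)` generated by `ξ₁^{2^n}`; that is, there is a short exact sequence
`0 → C(n) → C(n) → A(n) → 0` with first map multiplication by `ξ₁^{2^n}`. -/
theorem statement8 (k : Type) [CommRing k] (h2 : (2 : k) = 0) (τ ρ : k) (n : ℕ) :
    Function.Injective (fun x : Cn k τ ρ n =>
      x * Ideal.Quotient.mk (Jideal k τ ρ n) (mkDSA k τ ρ (xP k 1 ^ 2 ^ n))) ∧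
    ∃ φ : Cn k τ ρ n →+* An k τ ρ n,
      (∀ y : DSA k τ ρ,
        φ (Ideal.Quotient.mk (Jideal k τ ρ n) y) = Ideal.Quotient.mk (Iideal k τ ρ n) y) ∧
      Function.Surjective φ ∧
      RingHom.ker φ =
        Ideal.span {Ideal.Quotient.mk (Jideal k τ ρ n) (mkDSA k τ ρ (xP k 1 ^ 2 ^ n))} := by
  exact statement8' k h2 τ ρ n

end
end

section
/- For every integer n ≥ 0, the composite (π_n ⊗ π_n) ∘ ψ : 𝒜 → A(n) ⊗_{π_n∘η_R, π_n∘η_L} A(n) vanishes on the ideal I(n); consequently there is a unique ring homomorphism ψ_n : A(n) → A(n) ⊗_{π_n∘η_R, π_n∘η_L} A(n) with ψ_n ∘ π_n = (π_n ⊗ π_n) ∘ ψ. (The paper's verification that the coproduct of the dual motivic Steenrod algebroid descends to a coproduct on the quotient A(n)_{∗,∗}, case ℓ = 2.) -/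
open MvPolynomial TensorProduct

set_option synthInstance.maxHeartbeats 1000000
set_option maxHeartbeats 1000000

noncomputable section

variable (k : Type) [CommRing k]

variable (τ ρ : k)

instance (n : ℤ) : CommRing (An k τ ρ n) := inferInstance

/-- `k = F₂[τ, ρ]`, the mod 2 motivic cohomology ring of the base in the paper's model. -/
abbrev kk : Type := MvPolynomial (Fin 2) (ZMod 2)

/-- The element `τ ∈ k`. -/
def τ₂ : kk := X 0

/-- The element `ρ ∈ k`. -/
def ρ₂ : kk := X 1

/-- The right unit `η_R : k → 𝒜`: the unique `F₂`-algebra homomorphism with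
`η_R(τ) = τ + ρ·τ₀` and `η_R(ρ) = ρ`. -/
def etaR : kk →+* DSA kk τ₂ ρ₂ :=
  (MvPolynomial.aeval (R := ZMod 2)
    ![algebraMap kk (DSA kk τ₂ ρ₂) τ₂ +
        algebraMap kk (DSA kk τ₂ ρ₂) ρ₂ * mkDSA kk τ₂ ρ₂ (tP kk 0),
      algebraMap kk (DSA kk τ₂ ρ₂) ρ₂]).toRingHom

/-- Type synonym: `𝒜` viewed as a `k`-algebra via the right unit `η_R`. -/
def DSAr : Type := DSA kk τ₂ ρ₂

instance : CommRing DSAr := inferInstanceAs (CommRing (DSA kk τ₂ ρ₂))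

instance : Algebra kk DSAr := etaR.toAlgebra

/-- The identity of `𝒜`, viewed as a map to the synonym `DSAr`. -/
def toR : DSA kk τ₂ ρ₂ →+* DSAr := RingHom.id (DSA kk τ₂ ρ₂)

/-- Type synonym: `A(n)` viewed as a `k`-algebra via `π_n ∘ η_R`. -/
def Anr (n : ℤ) : Type := An kk τ₂ ρ₂ n

instance (n : ℤ) : CommRing (Anr n) := inferInstanceAs (CommRing (An kk τ₂ ρ₂ n))

instance (n : ℤ) : Algebra kk (Anr n) :=
  ((Ideal.Quotient.mk (Iideal kk τ₂ ρ₂ n)).comp etaR).toAlgebra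

/-- The identity of `A(n)`, viewed as a map to the synonym `Anr n`. -/
def toAnr (n : ℤ) : An kk τ₂ ρ₂ n →+* Anr n := RingHom.id (An kk τ₂ ρ₂ n)

/-- The projection `π_n : 𝒜 → A(n)` as a `k`-algebra homomorphism for the
right-unit algebra structures. -/
def pinAlg (n : ℤ) : DSAr →ₐ[kk] Anr n :=
  { toRingHom :=
      ((Ideal.Quotient.mk (Iideal kk τ₂ ρ₂ n) : DSA kk τ₂ ρ₂ →+* An kk τ₂ ρ₂ n) :
        DSAr →+* Anr n)
    commutes' := fun _ => rfl }

/-- The defining property of the coproduct `ψ : 𝒜 → 𝒜 ⊗_{η_R, η_L} 𝒜`: it is a ring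
homomorphism with `ψ(η_L(h)) = η_L(h) ⊗ 1`, `ψ(τ_m) = τ_m ⊗ 1 + Σ_{i+j=m} ξᵢ^{2^j} ⊗ τ_j`
and `ψ(ξ_m) = Σ_{i+j=m} ξᵢ^{2^j} ⊗ ξ_j` (with `ξ₀ = 1`). -/
def IsCoproduct (ψ : DSA kk τ₂ ρ₂ →+* DSAr ⊗[kk] DSA kk τ₂ ρ₂) : Prop :=
  (∀ h : kk, ψ (algebraMap kk (DSA kk τ₂ ρ₂) h) =
      toR (algebraMap kk (DSA kk τ₂ ρ₂) h) ⊗ₜ[kk] (1 : DSA kk τ₂ ρ₂)) ∧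
  (∀ m : ℕ, ψ (mkDSA kk τ₂ ρ₂ (tP kk m)) =
      toR (mkDSA kk τ₂ ρ₂ (tP kk m)) ⊗ₜ[kk] 1 +
        ∑ j ∈ Finset.range (m + 1),
          toR (mkDSA kk τ₂ ρ₂ (xP kk (m - j) ^ 2 ^ j)) ⊗ₜ[kk] mkDSA kk τ₂ ρ₂ (tP kk j)) ∧
  (∀ m : ℕ, 1 ≤ m → ψ (mkDSA kk τ₂ ρ₂ (xP kk m)) =
      ∑ j ∈ Finset.range (m + 1),
        toR (mkDSA kk τ₂ ρ₂ (xP kk (m - j) ^ 2 ^ j)) ⊗ₜ[kk] mkDSA kk τ₂ ρ₂ (xP kk j))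

/-- `π_n ⊗ π_n : 𝒜 ⊗_{η_R,η_L} 𝒜 → A(n) ⊗_{π_n∘η_R, π_n∘η_L} A(n)`. -/
def mapLR (n : ℤ) : DSAr ⊗[kk] DSA kk τ₂ ρ₂ →ₐ[kk] Anr n ⊗[kk] An kk τ₂ ρ₂ n :=
  Algebra.TensorProduct.map (pinAlg n) (Ideal.Quotient.mkₐ kk (Iideal kk τ₂ ρ₂ n))

private lemma add_pow_two_pow {R : Type*} [CommRing R] (h2 : ∀ x : R, x + x = 0) (a b : R) :
    ∀ j : ℕ, (a + b) ^ 2 ^ j = a ^ 2 ^ j + b ^ 2 ^ j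
  | 0 => by simp
  | (j + 1) => by
    have hsq : ∀ x y : R, (x + y) ^ 2 = x ^ 2 + y ^ 2 := by
      intro x y
      have h : (x + y) ^ 2 = x ^ 2 + y ^ 2 + (x * y + x * y) := by ring
      rw [h, h2, add_zero]
    rw [pow_succ', pow_mul, pow_mul, pow_mul, hsq, add_pow_two_pow h2 (a ^ 2) (b ^ 2) j]

private lemma sum_pow_two_pow {R : Type*} [CommRing R] (h2 : ∀ x : R, x + x = 0) {ι : Type*}
    (s : Finset ι) (f : ι → R) (j : ℕ) :
    (∑ i ∈ s, f i) ^ 2 ^ j = ∑ i ∈ s, f i ^ 2 ^ j := by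
  induction s using Finset.cons_induction with
  | empty => simp [zero_pow (Nat.two_pow_pos j).ne']
  | cons a s ha ih => rw [Finset.sum_cons, Finset.sum_cons, add_pow_two_pow h2, ih]

private lemma two_eq_zero_kk : (2 : kk) = 0 := by
  rw [← map_ofNat (MvPolynomial.C : ZMod 2 →+* kk) 2,
    show (2 : ZMod 2) = 0 from rfl, map_zero]

private lemma char2_module {M : Type*} [AddCommGroup M] [Module kk M] (x : M) : x + x = 0 := by
  have h : (2 : kk) • x = x + x := two_smul kk x
  rw [← h, two_eq_zero_kk, zero_smul]

private lemma pin_t_zero (n : ℤ) (m : ℕ) (hm : n + 1 ≤ (m : ℤ)) :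
    Ideal.Quotient.mk (Iideal kk τ₂ ρ₂ n) (mkDSA kk τ₂ ρ₂ (tP kk m)) = 0 := by
  rw [Ideal.Quotient.eq_zero_iff_mem]
  exact Ideal.subset_span (Or.inl ⟨m, hm, rfl⟩)

private lemma pin_x_zero (n : ℤ) (i j : ℕ) (hi : 1 ≤ i) (hij : n + 1 ≤ (i : ℤ) + (j : ℤ)) :
    Ideal.Quotient.mk (Iideal kk τ₂ ρ₂ n) (mkDSA kk τ₂ ρ₂ (xP kk i ^ 2 ^ j)) = 0 := by
  rw [Ideal.Quotient.eq_zero_iff_mem]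
  exact Ideal.subset_span (Or.inr ⟨i, j, hi, hij, rfl⟩)

private lemma pinAlg_t_zero (n : ℤ) (m : ℕ) (hm : n + 1 ≤ (m : ℤ)) :
    pinAlg n (toR (mkDSA kk τ₂ ρ₂ (tP kk m))) = 0 :=
  pin_t_zero n m hm

private lemma pinAlg_x_zero (n : ℤ) (i j : ℕ) (hi : 1 ≤ i) (hij : n + 1 ≤ (i : ℤ) + (j : ℤ)) :
    pinAlg n (toR (mkDSA kk τ₂ ρ₂ (xP kk i ^ 2 ^ j))) = 0 :=
  pin_x_zero n i j hi hij

private lemma mapLR_tmul (n : ℤ) (a b : DSA kk τ₂ ρ₂) :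
    mapLR n (toR a ⊗ₜ[kk] b) =
      pinAlg n (toR a) ⊗ₜ[kk] Ideal.Quotient.mk (Iideal kk τ₂ ρ₂ n) b := by
  simp [mapLR]

/-- For every `n ≥ 0`, the composite
`(π_n ⊗ π_n) ∘ ψ : 𝒜 → A(n) ⊗_{π_n∘η_R, π_n∘η_L} A(n)` vanishes on the ideal `I(n)`;
consequently there is a unique ring homomorphism
`ψ_n : A(n) → A(n) ⊗_{π_n∘η_R, π_n∘η_L} A(n)` with `ψ_n ∘ π_n = (π_n ⊗ π_n) ∘ ψ`. -/
theorem statement19 (n : ℕ)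
    (ψ : DSA kk τ₂ ρ₂ →+* DSAr ⊗[kk] DSA kk τ₂ ρ₂) (hψ : IsCoproduct ψ) :
    (∀ x ∈ Iideal kk τ₂ ρ₂ (n : ℤ), mapLR (n : ℤ) (ψ x) = 0) ∧
    ∃! ψn : An kk τ₂ ρ₂ (n : ℤ) →+* Anr (n : ℤ) ⊗[kk] An kk τ₂ ρ₂ (n : ℤ),
      ∀ x : DSA kk τ₂ ρ₂,
        ψn (Ideal.Quotient.mk (Iideal kk τ₂ ρ₂ (n : ℤ)) x) = mapLR (n : ℤ) (ψ x) := by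
  obtain ⟨hL, hT, hX⟩ := hψ
  have key : ∀ x ∈ Iideal kk τ₂ ρ₂ (n : ℤ), mapLR (n : ℤ) (ψ x) = 0 := by
    have hker : Iideal kk τ₂ ρ₂ (n : ℤ) ≤
        RingHom.ker (((mapLR (n : ℤ)).toRingHom).comp ψ) := by
      refine Ideal.span_le.mpr ?_
      rintro x (⟨m, hm, rfl⟩ | ⟨i, j, hi, hij, rfl⟩)
      · -- generator τ_m with m ≥ n+1
        rw [SetLike.mem_coe, RingHom.mem_ker, RingHom.comp_apply, AlgHom.toRingHom_eq_coe,
          AlgHom.coe_toRingHom, hT m, map_add, map_sum, mapLR_tmul,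
          pinAlg_t_zero (n : ℤ) m hm, TensorProduct.zero_tmul]
        rw [zero_add]
        refine Finset.sum_eq_zero ?_
        intro j hj
        rw [Finset.mem_range] at hj
        rw [mapLR_tmul]
        rcases eq_or_lt_of_le (Nat.lt_succ_iff.mp hj) with hjm | hjm
        · subst hjm
          rw [pin_t_zero (n : ℤ) j hm, TensorProduct.tmul_zero]
        · rw [pinAlg_x_zero (n : ℤ) (m - j) j (by omega)
            (by push_cast [Nat.cast_sub hjm.le]; omega), TensorProduct.zero_tmul]
      · -- generator ξ_i^{2^j} with i ≥ 1, i + j ≥ n+1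
        rw [SetLike.mem_coe, RingHom.mem_ker, RingHom.comp_apply, AlgHom.toRingHom_eq_coe,
          AlgHom.coe_toRingHom]
        have h1 : mkDSA kk τ₂ ρ₂ (xP kk i ^ 2 ^ j)
            = mkDSA kk τ₂ ρ₂ (xP kk i) ^ 2 ^ j := map_pow _ _ _
        rw [h1, map_pow]
        erw [(mapLR (n : ℤ)).toRingHom.map_pow]
        rw [hX i hi, map_sum]
        have hsum := sum_pow_two_pow (R := Anr (n : ℤ) ⊗[kk] An kk τ₂ ρ₂ (n : ℤ))
          (fun x => char2_module x) (Finset.range (i + 1))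
          (fun b => mapLR (n : ℤ)
            (toR (mkDSA kk τ₂ ρ₂ (xP kk (i - b) ^ 2 ^ b)) ⊗ₜ[kk] mkDSA kk τ₂ ρ₂ (xP kk b))) j
        refine hsum.trans (Finset.sum_eq_zero ?_)
        intro b hb
        rw [Finset.mem_range] at hb
        rw [mapLR_tmul, Algebra.TensorProduct.tmul_pow]
        rcases eq_or_lt_of_le (Nat.lt_succ_iff.mp hb) with hbi | hbi
        · -- b = i : second factor dies
          subst hbi
          have : (Ideal.Quotient.mk (Iideal kk τ₂ ρ₂ (n : ℤ))
              (mkDSA kk τ₂ ρ₂ (xP kk b))) ^ 2 ^ j = 0 := by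
            rw [← map_pow, ← map_pow]
            exact pin_x_zero (n : ℤ) b j hi hij
          rw [this, TensorProduct.tmul_zero]
        · -- b < i : first factor dies
          have : (pinAlg (n : ℤ) (toR (mkDSA kk τ₂ ρ₂ (xP kk (i - b) ^ 2 ^ b)))) ^ 2 ^ j
              = 0 := by
            have e : (xP kk (i - b) ^ 2 ^ b) ^ 2 ^ j = xP kk (i - b) ^ 2 ^ (b + j) := by
              rw [← pow_mul, ← pow_add]
            rw [← map_pow, ← map_pow, ← map_pow, e,
              pinAlg_x_zero (n : ℤ) (i - b) (b + j) (by omega)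
                (by push_cast [Nat.cast_sub hbi.le]; omega)]
          rw [this, TensorProduct.zero_tmul]
    intro x hx
    exact hker hx
  refine ⟨key, ?_⟩
  refine ⟨Ideal.Quotient.lift _ (((mapLR (n : ℤ)).toRingHom).comp ψ)
    (fun x hx => key x hx), fun x => Ideal.Quotient.lift_mk _ _ _, ?_⟩
  intro g hg
  refine RingHom.ext fun x => ?_
  obtain ⟨y, rfl⟩ := Ideal.Quotient.mk_surjective x
  rw [hg y, Ideal.Quotient.lift_mk]
  rfl

end
end
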